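/- With Δ(x) = Σ_{k=0}^{21} (−1)^k (b_k − b_{22}) cos(kx) − (820/33)(1 − cos(x/10)), where b_{2k} = b_{2k+1} = 4^{−k}·binomial(2k,k): Δ(x) > 0.90 for all x ∈ [2.908, 2.970]. -/

import Mathlib

open Real

noncomputable def b (k : ℕ) : ℝ := (Nat.choose (2*(k/2)) (k/2) : ℝ) / 4^(k/2)

noncomputable def Δ (x : ℝ) : ℝ :=
  (∑ k ∈ Finset.range 22, (-1)^k * (b k - b 22) * cos (k * x))
    - (820/33) * (1 - cos (x/10))

private lemma cosrec (t p : ℝ) : Real.cos (t + p) + Real.cos (t - p) = 2 * Real.cos t * Real.cos p := by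
  rw [Real.cos_add, Real.cos_sub]; ring

private lemma cube_le {x y : ℝ} (h : x ≤ y) : x^3 ≤ y^3 := by
  nlinarith [mul_nonneg (sub_nonneg.2 h) (sq_nonneg (x+y)), mul_nonneg (sub_nonneg.2 h) (sq_nonneg (x-y))]

private lemma sin_ival {x a b m E : ℝ} (h1 : a ≤ x) (h2 : x ≤ b) (hm1 : -m ≤ a) (hm2 : b ≤ m)
    (hm3 : m ≤ 1) (hE : m^4*(5/96) ≤ E) :
    a - b^3/6 - E ≤ Real.sin x ∧ Real.sin x ≤ b - a^3/6 + E := by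
  have hx : |x| ≤ m := abs_le.2 ⟨by linarith, by linarith⟩
  have h4 : |x|^4 ≤ m^4 := pow_le_pow_left₀ (abs_nonneg x) hx 4
  have hb := abs_le.1 (Real.sin_bound (hx.trans hm3))
  have hc1 : x^3 ≤ b^3 := cube_le h2
  have hc2 : a^3 ≤ x^3 := cube_le h1
  have h5 : |x|^5 ≤ |x|^4 := by
    have := abs_nonneg x
    have := hx.trans hm3
    calc |x|^5 = |x|^4*|x| := by ring
      _ ≤ |x|^4*1 := by gcongr
      _ = |x|^4 := by ring
  constructor <;> linarith [hb.1, hb.2, h4, hc1, hc2]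

private lemma sq_ival {t l u m M : ℝ} (hl : l ≤ t) (hu : t ≤ u) (hM1 : l^2 ≤ M) (hM2 : u^2 ≤ M)
    (hm : (0 ≤ l ∧ m ≤ l^2) ∨ (u ≤ 0 ∧ m ≤ u^2) ∨ m ≤ 0) : m ≤ t^2 ∧ t^2 ≤ M := by
  constructor
  · rcases hm with ⟨h0,hm⟩|⟨h0,hm⟩|hm
    · nlinarith
    · nlinarith
    · nlinarith [sq_nonneg t]
  · rcases le_or_gt 0 t with h|h
    · nlinarith
    · nlinarith

private lemma cos_from_sin {x y l u m M L U : ℝ} (hxy : x = 2*y) (hl : l ≤ Real.sin y)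
    (hu : Real.sin y ≤ u) (hM1 : l^2 ≤ M) (hM2 : u^2 ≤ M)
    (hm : (0 ≤ l ∧ m ≤ l^2) ∨ (u ≤ 0 ∧ m ≤ u^2) ∨ m ≤ 0)
    (hL : L ≤ 1-2*M) (hU : 1-2*m ≤ U) : L ≤ Real.cos x ∧ Real.cos x ≤ U := by
  have hs := sq_ival hl hu hM1 hM2 hm
  have e : Real.cos x = 1 - 2 * Real.sin y^2 := by
    rw [hxy]; have h := Real.sin_sq_eq_half_sub y; linarith
  rw [e]; exact ⟨by linarith [hs.1, hs.2], by linarith [hs.1, hs.2]⟩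

private lemma cos_dbl {x y l u m M L U : ℝ} (hxy : x = 2*y) (hl : l ≤ Real.cos y)
    (hu : Real.cos y ≤ u) (hM1 : l^2 ≤ M) (hM2 : u^2 ≤ M)
    (hm : (0 ≤ l ∧ m ≤ l^2) ∨ (u ≤ 0 ∧ m ≤ u^2) ∨ m ≤ 0)
    (hL : L ≤ 2*m-1) (hU : 2*M-1 ≤ U) : L ≤ Real.cos x ∧ Real.cos x ≤ U := by
  have hs := sq_ival hl hu hM1 hM2 hm
  have e : Real.cos x = 2 * Real.cos y^2 - 1 := by rw [hxy, Real.cos_two_mul]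
  rw [e]; exact ⟨by linarith [hs.1, hs.2], by linarith [hs.1, hs.2]⟩

private lemma mul_nn {c K A B l u : ℝ} (hA : A ≤ c) (hB : c ≤ B) (hB0 : B ≤ 0)
    (hl : l ≤ K) (h0 : 0 ≤ l) (hu : K ≤ u) : A*u ≤ c*K ∧ c*K ≤ B*l := by
  have hA0 : A ≤ 0 := hA.trans (hB.trans hB0)
  constructor
  · nlinarith [mul_nonneg (sub_nonneg.2 hA) (h0.trans hl), mul_nonneg (neg_nonneg.2 hA0) (sub_nonneg.2 hu)]
  · nlinarith [mul_nonneg (neg_nonneg.2 hB0) (sub_nonneg.2 hl), mul_nonneg (sub_nonneg.2 hB) (h0.trans hl)]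

private lemma mul_np {c K A B l u : ℝ} (hA : A ≤ c) (hB : c ≤ B) (hB0 : B ≤ 0)
    (hl : l ≤ K) (hu : K ≤ u) (h0 : u ≤ 0) : B*u ≤ c*K ∧ c*K ≤ A*l := by
  have hc0 : c ≤ 0 := hB.trans hB0
  have hA0 : A ≤ 0 := hA.trans hc0
  constructor
  · nlinarith [mul_nonneg (neg_nonneg.2 hc0) (sub_nonneg.2 hu), mul_nonneg (sub_nonneg.2 hB) (neg_nonneg.2 h0)]
  · nlinarith [mul_nonneg (neg_nonneg.2 hA0) (sub_nonneg.2 hl), mul_nonneg (sub_nonneg.2 hA) (neg_nonneg.2 (hu.trans h0))]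

private lemma dExpand (x : ℝ) : Δ x = (436109/524288) + (-436109/524288) * Real.cos x + (173965/524288) * Real.cos (2*x) + (-173965/524288) * Real.cos (3*x) + (108429/524288) * Real.cos (4*x) + (-108429/524288) * Real.cos (5*x) + (75661/524288) * Real.cos (6*x) + (-75661/524288) * Real.cos (7*x) + (55181/524288) * Real.cos (8*x) + (-55181/524288) * Real.cos (9*x) + (40845/524288) * Real.cos (10*x) + (-40845/524288) * Real.cos (11*x) + (30093/524288) * Real.cos (12*x) + (-30093/524288) * Real.cos (13*x) + (21645/524288) * Real.cos (14*x) + (-21645/524288) * Real.cos (15*x) + (14781/524288) * Real.cos (16*x) + (-14781/524288) * Real.cos (17*x) + (9061/524288) * Real.cos (18*x) + (-9061/524288) * Real.cos (19*x) + (4199/524288) * Real.cos (20*x) + (-4199/524288) * Real.cos (21*x) - 820/33 * (1 - Real.cos (x/10)) := by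
  simp only [Δ, Finset.sum_range_succ, Finset.sum_range_zero, b]
  norm_num [Nat.choose]



private lemma cos_diff (k x y : ℝ) (hk : 0 ≤ k) : |Real.cos (k*x) - Real.cos (k*y)| ≤ k * |x - y| := by
  rw [Real.cos_sub_cos, abs_mul, abs_mul, abs_neg]
  have h1 : |Real.sin ((k*x + k*y)/2)| ≤ 1 := Real.abs_sin_le_one _
  have h2 : |Real.sin ((k*x - k*y)/2)| ≤ |(k*x - k*y)/2| := Real.abs_sin_le_abs
  have h3 : |(k*x - k*y)/2| = k*|x-y|/2 := by
    rw [show (k*x - k*y)/2 = k*(x-y)/2 by ring, abs_div, abs_mul, abs_of_nonneg hk, abs_two]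
  have h4 : |(2:ℝ)| = 2 := abs_two
  have h5 := abs_nonneg (Real.sin ((k*x - k*y)/2))
  have h6 := abs_nonneg (Real.sin ((k*x + k*y)/2))
  have h7 := abs_nonneg ((k*x - k*y)/2)
  calc |(2:ℝ)| * |Real.sin ((k*x + k*y)/2)| * |Real.sin ((k*x - k*y)/2)|
      ≤ 2 * 1 * |(k*x - k*y)/2| := by rw [h4]; nlinarith
    _ = k*|x-y| := by rw [h3]; ring



private lemma dLip (x y : ℝ) : Δ x ≥ Δ y - 17 * |x - y| := by
  have h0 := abs_nonneg (x - y)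
  have h1 := abs_le.1 ((cos_diff 1 x y (by norm_num)).trans_eq (by ring))
  have h2 := abs_le.1 (cos_diff 2 x y (by norm_num))
  have h3 := abs_le.1 (cos_diff 3 x y (by norm_num))
  have h4 := abs_le.1 (cos_diff 4 x y (by norm_num))
  have h5 := abs_le.1 (cos_diff 5 x y (by norm_num))
  have h6 := abs_le.1 (cos_diff 6 x y (by norm_num))
  have h7 := abs_le.1 (cos_diff 7 x y (by norm_num))
  have h8 := abs_le.1 (cos_diff 8 x y (by norm_num))
  have h9 := abs_le.1 (cos_diff 9 x y (by norm_num))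
  have h10 := abs_le.1 (cos_diff 10 x y (by norm_num))
  have h11 := abs_le.1 (cos_diff 11 x y (by norm_num))
  have h12 := abs_le.1 (cos_diff 12 x y (by norm_num))
  have h13 := abs_le.1 (cos_diff 13 x y (by norm_num))
  have h14 := abs_le.1 (cos_diff 14 x y (by norm_num))
  have h15 := abs_le.1 (cos_diff 15 x y (by norm_num))
  have h16 := abs_le.1 (cos_diff 16 x y (by norm_num))
  have h17 := abs_le.1 (cos_diff 17 x y (by norm_num))
  have h18 := abs_le.1 (cos_diff 18 x y (by norm_num))
  have h19 := abs_le.1 (cos_diff 19 x y (by norm_num))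
  have h20 := abs_le.1 (cos_diff 20 x y (by norm_num))
  have h21 := abs_le.1 (cos_diff 21 x y (by norm_num))
  have hq := abs_le.1 (cos_diff (1/10) x y (by norm_num))
  rw [show (1/10:ℝ)*x = x/10 by ring, show (1/10:ℝ)*y = y/10 by ring] at hq
  simp only [one_mul] at h1
  rw [dExpand, dExpand]
  linarith [h1.1, h1.2, h2.1, h2.2, h3.1, h3.2, h4.1, h4.2, h5.1, h5.2, h6.1, h6.2, h7.1, h7.2, h8.1, h8.2, h9.1, h9.2, h10.1, h10.2, h11.1, h11.2, h12.1, h12.2, h13.1, h13.2, h14.1, h14.2, h15.1, h15.2, h16.1, h16.2, h17.1, h17.2, h18.1, h18.2, h19.1, h19.2, h20.1, h20.2, h21.1, h21.2, hq.1, hq.2]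


set_option maxHeartbeats 1000000 in

private lemma pt1 : Δ ((2.9095:ℝ)) > ((462767951114271/500000000000000:ℝ)) := by
  have hpl := Real.pi_gt_d20
  have hpu := Real.pi_lt_d20
  obtain ⟨r, hr⟩ : ∃ y:ℝ, (2.9095:ℝ) - π = y := ⟨_, rfl⟩
  have hRl : ((-116046326794897/500000000000000:ℝ)) ≤ r := by rw [← hr]; linarith only [hpu]
  have hRu : r ≤ ((-232092653589793/1000000000000000:ℝ)) := by rw [← hr]; linarith only [hpl]
  have es := sin_ival (m := (1813223856171/1000000000000000:ℝ)) (E := (141/250000000000000:ℝ)) (by linarith only [hRl] : ((-1813223856171/1000000000000000:ℝ)) ≤ (r)/128) (by linarith only [hRu] : (r)/128 ≤ ((-181322385617/100000000000000:ℝ))) (by norm_num) (by norm_num) (by norm_num) (by norm_num)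
  have esl : ((-362644572631/200000000000000:ℝ)) ≤ Real.sin ((r)/128) := by linarith only [es.1, (by norm_num : ((-362644572631/200000000000000:ℝ)) ≤ ((-1813223856171/1000000000000000:ℝ)) - ((-181322385617/100000000000000:ℝ))^3/6 - ((141/250000000000000:ℝ)))]
  have esu : Real.sin ((r)/128) ≤ ((-72528914481/40000000000000:ℝ)) := by linarith only [es.2, (by norm_num : ((-181322385617/100000000000000:ℝ)) - ((-1813223856171/1000000000000000:ℝ))^3/6 + ((141/250000000000000:ℝ)) ≤ ((-72528914481/40000000000000:ℝ)))]
  have ec64 := cos_from_sin (show (r)/64 = 2*((r)/128) by ring) esl esu (by norm_num) (by norm_num) (Or.inr (Or.inl ⟨by norm_num, by norm_num⟩)) (show ((3906224314241/3906250000000:ℝ)) ≤ 1-2*((25685759/7812500000000:ℝ)) by norm_num) (show 1-2*((3287777147/1000000000000000:ℝ)) ≤ ((499996712222853/500000000000000:ℝ)) by norm_num)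
  have ec32 := cos_dbl (show (r)/32 = 2*((r)/64) by ring) ec64.1 ec64.2 (by norm_num) (by norm_num) (Or.inl ⟨by norm_num, by norm_num⟩) (show ((499986848934629/500000000000000:ℝ)) ≤ 2*((999986848934629/1000000000000000:ℝ))-1 by norm_num) (show 2*((19999736978693/20000000000000:ℝ))-1 ≤ ((9999736978693/10000000000000:ℝ)) by norm_num)
  have ec16 := cos_dbl (show (r)/16 = 2*((r)/32) by ring) ec32.1 ec32.2 (by norm_num) (by norm_num) (Or.inl ⟨by norm_num, by norm_num⟩) (show ((249973698215159/250000000000000:ℝ)) ≤ 2*((499973698215159/500000000000000:ℝ))-1 by norm_num) (show 2*((999947396430403/1000000000000000:ℝ))-1 ≤ ((499947396430403/500000000000000:ℝ)) by norm_num)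
  have ec8 := cos_dbl (show (r)/8 = 2*((r)/16) by ring) ec16.1 ec16.2 (by norm_num) (by norm_num) (Or.inl ⟨by norm_num, by norm_num⟩) (show ((249894798394907/250000000000000:ℝ)) ≤ 2*((499894798394907/500000000000000:ℝ))-1 by norm_num) (show 2*((199957919358031/200000000000000:ℝ))-1 ≤ ((99957919358031/100000000000000:ℝ)) by norm_num)
  have ec4 := cos_dbl (show (r)/4 = 2*((r)/8) by ring) ec8.1 ec8.2 (by norm_num) (by norm_num) (Or.inl ⟨by norm_num, by norm_num⟩) (show ((499158564237299/500000000000000:ℝ)) ≤ 2*((999158564237299/1000000000000000:ℝ))-1 by norm_num) (show 2*((999158564238663/1000000000000000:ℝ))-1 ≤ ((499158564238663/500000000000000:ℝ)) by norm_num)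
  have ec2 := cos_dbl (show (r)/2 = 2*((r)/4) by ring) ec4.1 ec4.2 (by norm_num) (by norm_num) (Or.inl ⟨by norm_num, by norm_num⟩) (show ((496637089005767/500000000000000:ℝ)) ≤ 2*((996637089005767/1000000000000000:ℝ))-1 by norm_num) (show 2*((498318544505607/500000000000000:ℝ))-1 ≤ ((248318544505607/250000000000000:ℝ)) by norm_num)
  have ec1 := cos_dbl (show (r) = 2*((r)/2) by ring) ec2.1 ec2.2 (by norm_num) (by norm_num) (Or.inl ⟨by norm_num, by norm_num⟩) (show ((60824199088061/62500000000000:ℝ)) ≤ 2*((123324199088061/125000000000000:ℝ))-1 by norm_num) (show 2*((98659359272613/100000000000000:ℝ))-1 ≤ ((48659359272613/50000000000000:ℝ)) by norm_num)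
  have hid : Real.cos ((2.9095:ℝ)) = -Real.cos r := by rw [show ((2.9095:ℝ):ℝ) = r + π by rw [← hr]; ring, Real.cos_add_pi]
  have hK1 : ((-48659359272613/50000000000000:ℝ)) ≤ Real.cos ((2.9095:ℝ)) ∧ Real.cos ((2.9095:ℝ)) ≤ ((-60824199088061/62500000000000:ℝ)) := by rw [hid]; exact ⟨by linarith only [ec1.2], by linarith only [ec1.1]⟩
  have s2 := sq_ival (m := (236773324461061/250000000000000:ℝ)) (M := (236773324482123/250000000000000:ℝ)) hK1.1 hK1.2 (by norm_num) (by norm_num) (Or.inr (Or.inl ⟨by norm_num, by norm_num⟩))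
  have e2 : Real.cos (2 * (2.9095:ℝ)) = 2 * Real.cos ((2.9095:ℝ)) ^ 2 - 1 := by have h := Real.cos_two_mul ((2.9095:ℝ)); rw [show 2 * ((2.9095:ℝ):ℝ) = 2 * (2.9095:ℝ) by norm_num] at h; exact h
  have hK2 : ((111773324461061/125000000000000:ℝ)) ≤ Real.cos (2 * (2.9095:ℝ)) ∧ Real.cos (2 * (2.9095:ℝ)) ≤ ((111773324482123/125000000000000:ℝ)) := by rw [e2]; exact ⟨by linarith only [s2.1], by linarith only [s2.2]⟩
  have p3 := mul_nn hK1.1 hK1.2 (by norm_num) hK2.1 (by norm_num) hK2.2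
  have e3 : Real.cos (3 * (2.9095:ℝ)) = 2 * Real.cos ((2.9095:ℝ)) * Real.cos (2 * (2.9095:ℝ)) - Real.cos ((2.9095:ℝ)) := by have h := cosrec (2 * (2.9095:ℝ)) ((2.9095:ℝ)); rw [show (2 * (2.9095:ℝ)) + (2.9095:ℝ) = 3 * (2.9095:ℝ) by norm_num, show (2 * (2.9095:ℝ)) - (2.9095:ℝ) = (2.9095:ℝ) by norm_num] at h; linarith only [h]
  have hK3 : ((-95904335946677/125000000000000:ℝ)) ≤ Real.cos (3 * (2.9095:ℝ)) ∧ Real.cos (3 * (2.9095:ℝ)) ≤ ((-767234687124767/1000000000000000:ℝ)) := by rw [e3]; exact ⟨by linarith only [p3.1, hK1.2], by linarith only [p3.2, hK1.1]⟩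
  have p4 := mul_np hK1.1 hK1.2 (by norm_num) hK3.1 hK3.2 (by norm_num)
  have e4 : Real.cos (4 * (2.9095:ℝ)) = 2 * Real.cos ((2.9095:ℝ)) * Real.cos (3 * (2.9095:ℝ)) - Real.cos (2 * (2.9095:ℝ)) := by have h := cosrec (3 * (2.9095:ℝ)) ((2.9095:ℝ)); rw [show (3 * (2.9095:ℝ)) + (2.9095:ℝ) = 4 * (2.9095:ℝ) by norm_num, show (3 * (2.9095:ℝ)) - (2.9095:ℝ) = 2 * (2.9095:ℝ) by norm_num] at h; linarith only [h]
  have hK4 : ((74892416945649/125000000000000:ℝ)) ≤ Real.cos (4 * (2.9095:ℝ)) ∧ Real.cos (4 * (2.9095:ℝ)) ≤ ((299569668336673/500000000000000:ℝ)) := by rw [e4]; exact ⟨by linarith only [p4.1, hK2.2], by linarith only [p4.2, hK2.1]⟩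
  have p5 := mul_nn hK1.1 hK1.2 (by norm_num) hK4.1 (by norm_num) hK4.2
  have e5 : Real.cos (5 * (2.9095:ℝ)) = 2 * Real.cos ((2.9095:ℝ)) * Real.cos (4 * (2.9095:ℝ)) - Real.cos (3 * (2.9095:ℝ)) := by have h := cosrec (4 * (2.9095:ℝ)) ((2.9095:ℝ)); rw [show (4 * (2.9095:ℝ)) + (2.9095:ℝ) = 5 * (2.9095:ℝ) by norm_num, show (4 * (2.9095:ℝ)) - (2.9095:ℝ) = 3 * (2.9095:ℝ) by norm_num] at h; linarith only [h]
  have hK5 : ((-398914762376969/1000000000000000:ℝ)) ≤ Real.cos (5 * (2.9095:ℝ)) ∧ Real.cos (5 * (2.9095:ℝ)) ≤ ((-39891475971957/100000000000000:ℝ)) := by rw [e5]; exact ⟨by linarith only [p5.1, hK3.2], by linarith only [p5.2, hK3.1]⟩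
  have p6 := mul_np hK1.1 hK1.2 (by norm_num) hK5.1 hK5.2 (by norm_num)
  have e6 : Real.cos (6 * (2.9095:ℝ)) = 2 * Real.cos ((2.9095:ℝ)) * Real.cos (5 * (2.9095:ℝ)) - Real.cos (4 * (2.9095:ℝ)) := by have h := cosrec (5 * (2.9095:ℝ)) ((2.9095:ℝ)); rw [show (5 * (2.9095:ℝ)) + (2.9095:ℝ) = 6 * (2.9095:ℝ) by norm_num, show (5 * (2.9095:ℝ)) - (2.9095:ℝ) = 4 * (2.9095:ℝ) by norm_num] at h; linarith only [h]
  have hK6 : ((88649063892913/500000000000000:ℝ)) ≤ Real.cos (6 * (2.9095:ℝ)) ∧ Real.cos (6 * (2.9095:ℝ)) ≤ ((22162266762601/125000000000000:ℝ)) := by rw [e6]; exact ⟨by linarith only [p6.1, hK4.2], by linarith only [p6.2, hK4.1]⟩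
  have p7 := mul_nn hK1.1 hK1.2 (by norm_num) hK6.1 (by norm_num) hK6.2
  have e7 : Real.cos (7 * (2.9095:ℝ)) = 2 * Real.cos ((2.9095:ℝ)) * Real.cos (6 * (2.9095:ℝ)) - Real.cos (5 * (2.9095:ℝ)) := by have h := cosrec (6 * (2.9095:ℝ)) ((2.9095:ℝ)); rw [show (6 * (2.9095:ℝ)) + (2.9095:ℝ) = 7 * (2.9095:ℝ) by norm_num, show (6 * (2.9095:ℝ)) - (2.9095:ℝ) = 5 * (2.9095:ℝ) by norm_num] at h; linarith only [h]
  have hK7 : ((13456553874141/250000000000000:ℝ)) ≤ Real.cos (7 * (2.9095:ℝ)) ∧ Real.cos (7 * (2.9095:ℝ)) ≤ ((6728278807579/125000000000000:ℝ)) := by rw [e7]; exact ⟨by linarith only [p7.1, hK5.2], by linarith only [p7.2, hK5.1]⟩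
  have p8 := mul_nn hK1.1 hK1.2 (by norm_num) hK7.1 (by norm_num) hK7.2
  have e8 : Real.cos (8 * (2.9095:ℝ)) = 2 * Real.cos ((2.9095:ℝ)) * Real.cos (7 * (2.9095:ℝ)) - Real.cos (6 * (2.9095:ℝ)) := by have h := cosrec (7 * (2.9095:ℝ)) ((2.9095:ℝ)); rw [show (7 * (2.9095:ℝ)) + (2.9095:ℝ) = 8 * (2.9095:ℝ) by norm_num, show (7 * (2.9095:ℝ)) - (2.9095:ℝ) = 6 * (2.9095:ℝ) by norm_num] at h; linarith only [h]
  have hK8 : ((-282064129551783/1000000000000000:ℝ)) ≤ Real.cos (8 * (2.9095:ℝ)) ∧ Real.cos (8 * (2.9095:ℝ)) ≤ ((-141032047053231/500000000000000:ℝ)) := by rw [e8]; exact ⟨by linarith only [p8.1, hK6.2], by linarith only [p8.2, hK6.1]⟩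
  have p9 := mul_np hK1.1 hK1.2 (by norm_num) hK8.1 hK8.2 (by norm_num)
  have e9 : Real.cos (9 * (2.9095:ℝ)) = 2 * Real.cos ((2.9095:ℝ)) * Real.cos (8 * (2.9095:ℝ)) - Real.cos (7 * (2.9095:ℝ)) := by have h := cosrec (8 * (2.9095:ℝ)) ((2.9095:ℝ)); rw [show (8 * (2.9095:ℝ)) + (2.9095:ℝ) = 9 * (2.9095:ℝ) by norm_num, show (8 * (2.9095:ℝ)) - (2.9095:ℝ) = 7 * (2.9095:ℝ) by norm_num] at h; linarith only [h]
  have hK9 : ((61897011654521/125000000000000:ℝ)) ≤ Real.cos (9 * (2.9095:ℝ)) ∧ Real.cos (9 * (2.9095:ℝ)) ≤ ((495176177214519/1000000000000000:ℝ)) := by rw [e9]; exact ⟨by linarith only [p9.1, hK7.2], by linarith only [p9.2, hK7.1]⟩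
  have p10 := mul_nn hK1.1 hK1.2 (by norm_num) hK9.1 (by norm_num) hK9.2
  have e10 : Real.cos (10 * (2.9095:ℝ)) = 2 * Real.cos ((2.9095:ℝ)) * Real.cos (9 * (2.9095:ℝ)) - Real.cos (8 * (2.9095:ℝ)) := by have h := cosrec (9 * (2.9095:ℝ)) ((2.9095:ℝ)); rw [show (9 * (2.9095:ℝ)) + (2.9095:ℝ) = 10 * (2.9095:ℝ) by norm_num, show (9 * (2.9095:ℝ)) - (2.9095:ℝ) = 8 * (2.9095:ℝ) by norm_num] at h; linarith only [h]
  have hK10 : ((-681734126306353/1000000000000000:ℝ)) ≤ Real.cos (10 * (2.9095:ℝ)) ∧ Real.cos (10 * (2.9095:ℝ)) ≤ ((-136346785472971/200000000000000:ℝ)) := by rw [e10]; exact ⟨by linarith only [p10.1, hK8.2], by linarith only [p10.2, hK8.1]⟩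
  have p11 := mul_np hK1.1 hK1.2 (by norm_num) hK10.1 hK10.2 (by norm_num)
  have e11 : Real.cos (11 * (2.9095:ℝ)) = 2 * Real.cos ((2.9095:ℝ)) * Real.cos (10 * (2.9095:ℝ)) - Real.cos (9 * (2.9095:ℝ)) := by have h := cosrec (10 * (2.9095:ℝ)) ((2.9095:ℝ)); rw [show (10 * (2.9095:ℝ)) + (2.9095:ℝ) = 11 * (2.9095:ℝ) by norm_num, show (10 * (2.9095:ℝ)) - (2.9095:ℝ) = 9 * (2.9095:ℝ) by norm_num] at h; linarith only [h]
  have hK11 : ((415866633362751/500000000000000:ℝ)) ≤ Real.cos (11 * (2.9095:ℝ)) ∧ Real.cos (11 * (2.9095:ℝ)) ≤ ((831733737977503/1000000000000000:ℝ)) := by rw [e11]; exact ⟨by linarith only [p11.1, hK9.2], by linarith only [p11.2, hK9.1]⟩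
  have p12 := mul_nn hK1.1 hK1.2 (by norm_num) hK11.1 (by norm_num) hK11.2
  have e12 : Real.cos (12 * (2.9095:ℝ)) = 2 * Real.cos ((2.9095:ℝ)) * Real.cos (11 * (2.9095:ℝ)) - Real.cos (10 * (2.9095:ℝ)) := by have h := cosrec (11 * (2.9095:ℝ)) ((2.9095:ℝ)); rw [show (11 * (2.9095:ℝ)) + (2.9095:ℝ) = 12 * (2.9095:ℝ) by norm_num, show (11 * (2.9095:ℝ)) - (2.9095:ℝ) = 10 * (2.9095:ℝ) by norm_num] at h; linarith only [h]
  have hK12 : ((-937131303651173/1000000000000000:ℝ)) ≤ Real.cos (12 * (2.9095:ℝ)) ∧ Real.cos (12 * (2.9095:ℝ)) ≤ ((-187426037480971/200000000000000:ℝ)) := by rw [e12]; exact ⟨by linarith only [p12.1, hK10.2], by linarith only [p12.2, hK10.1]⟩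
  have p13 := mul_np hK1.1 hK1.2 (by norm_num) hK12.1 hK12.2 (by norm_num)
  have e13 : Real.cos (13 * (2.9095:ℝ)) = 2 * Real.cos ((2.9095:ℝ)) * Real.cos (12 * (2.9095:ℝ)) - Real.cos (11 * (2.9095:ℝ)) := by have h := cosrec (12 * (2.9095:ℝ)) ((2.9095:ℝ)); rw [show (12 * (2.9095:ℝ)) + (2.9095:ℝ) = 13 * (2.9095:ℝ) by norm_num, show (12 * (2.9095:ℝ)) - (2.9095:ℝ) = 11 * (2.9095:ℝ) by norm_num] at h; linarith only [h]
  have hK13 : ((992272440907131/1000000000000000:ℝ)) ≤ Real.cos (13 * (2.9095:ℝ)) ∧ Real.cos (13 * (2.9095:ℝ)) ≤ ((992275084873483/1000000000000000:ℝ)) := by rw [e13]; exact ⟨by linarith only [p13.1, hK11.2], by linarith only [p13.2, hK11.1]⟩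
  have p14 := mul_nn hK1.1 hK1.2 (by norm_num) hK13.1 (by norm_num) hK13.2
  have e14 : Real.cos (14 * (2.9095:ℝ)) = 2 * Real.cos ((2.9095:ℝ)) * Real.cos (13 * (2.9095:ℝ)) - Real.cos (12 * (2.9095:ℝ)) := by have h := cosrec (13 * (2.9095:ℝ)) ((2.9095:ℝ)); rw [show (13 * (2.9095:ℝ)) + (2.9095:ℝ) = 14 * (2.9095:ℝ) by norm_num, show (13 * (2.9095:ℝ)) - (2.9095:ℝ) = 12 * (2.9095:ℝ) by norm_num] at h; linarith only [h]
  have hK14 : ((-24855215167/25000000000:ℝ)) ≤ Real.cos (14 * (2.9095:ℝ)) ∧ Real.cos (14 * (2.9095:ℝ)) ≤ ((-994202344199437/1000000000000000:ℝ)) := by rw [e14]; exact ⟨by linarith only [p14.1, hK12.2], by linarith only [p14.2, hK12.1]⟩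
  have p15 := mul_np hK1.1 hK1.2 (by norm_num) hK14.1 hK14.2 (by norm_num)
  have e15 : Real.cos (15 * (2.9095:ℝ)) = 2 * Real.cos ((2.9095:ℝ)) * Real.cos (14 * (2.9095:ℝ)) - Real.cos (13 * (2.9095:ℝ)) := by have h := cosrec (14 * (2.9095:ℝ)) ((2.9095:ℝ)); rw [show (14 * (2.9095:ℝ)) + (2.9095:ℝ) = 15 * (2.9095:ℝ) by norm_num, show (14 * (2.9095:ℝ)) - (2.9095:ℝ) = 13 * (2.9095:ℝ) by norm_num] at h; linarith only [h]
  have hK15 : ((942814877283429/1000000000000000:ℝ)) ≤ Real.cos (15 * (2.9095:ℝ)) ∧ Real.cos (15 * (2.9095:ℝ)) ≤ ((471414855233757/500000000000000:ℝ)) := by rw [e15]; exact ⟨by linarith only [p15.1, hK13.2], by linarith only [p15.2, hK13.1]⟩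
  have p16 := mul_nn hK1.1 hK1.2 (by norm_num) hK15.1 (by norm_num) hK15.2
  have e16 : Real.cos (16 * (2.9095:ℝ)) = 2 * Real.cos ((2.9095:ℝ)) * Real.cos (15 * (2.9095:ℝ)) - Real.cos (14 * (2.9095:ℝ)) := by have h := cosrec (15 * (2.9095:ℝ)) ((2.9095:ℝ)); rw [show (15 * (2.9095:ℝ)) + (2.9095:ℝ) = 16 * (2.9095:ℝ) by norm_num, show (15 * (2.9095:ℝ)) - (2.9095:ℝ) = 14 * (2.9095:ℝ) by norm_num] at h; linarith only [h]
  have hK16 : ((-420448620190931/500000000000000:ℝ)) ≤ Real.cos (16 * (2.9095:ℝ)) ∧ Real.cos (16 * (2.9095:ℝ)) ≤ ((-420431053445169/500000000000000:ℝ)) := by rw [e16]; exact ⟨by linarith only [p16.1, hK14.2], by linarith only [p16.2, hK14.1]⟩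
  have p17 := mul_np hK1.1 hK1.2 (by norm_num) hK16.1 hK16.2 (by norm_num)
  have e17 : Real.cos (17 * (2.9095:ℝ)) = 2 * Real.cos ((2.9095:ℝ)) * Real.cos (16 * (2.9095:ℝ)) - Real.cos (15 * (2.9095:ℝ)) := by have h := cosrec (16 * (2.9095:ℝ)) ((2.9095:ℝ)); rw [show (16 * (2.9095:ℝ)) + (2.9095:ℝ) = 17 * (2.9095:ℝ) by norm_num, show (16 * (2.9095:ℝ)) - (2.9095:ℝ) = 15 * (2.9095:ℝ) by norm_num] at h; linarith only [h]
  have hK17 : ((27752109751033/40000000000000:ℝ)) ≤ Real.cos (17 * (2.9095:ℝ)) ∧ Real.cos (17 * (2.9095:ℝ)) ≤ ((138777191992033/200000000000000:ℝ)) := by rw [e17]; exact ⟨by linarith only [p17.1, hK15.2], by linarith only [p17.2, hK15.1]⟩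
  have p18 := mul_nn hK1.1 hK1.2 (by norm_num) hK17.1 (by norm_num) hK17.2
  have e18 : Real.cos (18 * (2.9095:ℝ)) = 2 * Real.cos ((2.9095:ℝ)) * Real.cos (17 * (2.9095:ℝ)) - Real.cos (16 * (2.9095:ℝ)) := by have h := cosrec (17 * (2.9095:ℝ)) ((2.9095:ℝ)); rw [show (17 * (2.9095:ℝ)) + (2.9095:ℝ) = 18 * (2.9095:ℝ) by norm_num, show (17 * (2.9095:ℝ)) - (2.9095:ℝ) = 16 * (2.9095:ℝ) by norm_num] at h; linarith only [h]
  have hK18 : ((-31856233869163/62500000000000:ℝ)) ≤ Real.cos (18 * (2.9095:ℝ)) ∧ Real.cos (18 * (2.9095:ℝ)) ≤ ((-254751319253289/500000000000000:ℝ)) := by rw [e18]; exact ⟨by linarith only [p18.1, hK16.2], by linarith only [p18.2, hK16.1]⟩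
  have p19 := mul_np hK1.1 hK1.2 (by norm_num) hK18.1 hK18.2 (by norm_num)
  have e19 : Real.cos (19 * (2.9095:ℝ)) = 2 * Real.cos ((2.9095:ℝ)) * Real.cos (18 * (2.9095:ℝ)) - Real.cos (17 * (2.9095:ℝ)) := by have h := cosrec (18 * (2.9095:ℝ)) ((2.9095:ℝ)); rw [show (18 * (2.9095:ℝ)) + (2.9095:ℝ) = 19 * (2.9095:ℝ) by norm_num, show (18 * (2.9095:ℝ)) - (2.9095:ℝ) = 17 * (2.9095:ℝ) by norm_num] at h; linarith only [h]
  have hK19 : ((148898458746581/500000000000000:ℝ)) ≤ Real.cos (19 * (2.9095:ℝ)) ∧ Real.cos (19 * (2.9095:ℝ)) ≤ ((149131885363923/500000000000000:ℝ)) := by rw [e19]; exact ⟨by linarith only [p19.1, hK17.2], by linarith only [p19.2, hK17.1]⟩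
  have p20 := mul_nn hK1.1 hK1.2 (by norm_num) hK19.1 (by norm_num) hK19.2
  have e20 : Real.cos (20 * (2.9095:ℝ)) = 2 * Real.cos ((2.9095:ℝ)) * Real.cos (19 * (2.9095:ℝ)) - Real.cos (18 * (2.9095:ℝ)) := by have h := cosrec (19 * (2.9095:ℝ)) ((2.9095:ℝ)); rw [show (19 * (2.9095:ℝ)) + (2.9095:ℝ) = 20 * (2.9095:ℝ) by norm_num, show (19 * (2.9095:ℝ)) - (2.9095:ℝ) = 18 * (2.9095:ℝ) by norm_num] at h; linarith only [h]
  have hK20 : ((-17757580151861/250000000000000:ℝ)) ≤ Real.cos (20 * (2.9095:ℝ)) ∧ Real.cos (20 * (2.9095:ℝ)) ≤ ((-6992454601067/100000000000000:ℝ)) := by rw [e20]; exact ⟨by linarith only [p20.1, hK18.2], by linarith only [p20.2, hK18.1]⟩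
  have p21 := mul_np hK1.1 hK1.2 (by norm_num) hK20.1 hK20.2 (by norm_num)
  have e21 : Real.cos (21 * (2.9095:ℝ)) = 2 * Real.cos ((2.9095:ℝ)) * Real.cos (20 * (2.9095:ℝ)) - Real.cos (19 * (2.9095:ℝ)) := by have h := cosrec (20 * (2.9095:ℝ)) ((2.9095:ℝ)); rw [show (20 * (2.9095:ℝ)) + (2.9095:ℝ) = 21 * (2.9095:ℝ) by norm_num, show (20 * (2.9095:ℝ)) - (2.9095:ℝ) = 19 * (2.9095:ℝ) by norm_num] at h; linarith only [h]
  have hK21 : ((-81082213240799/500000000000000:ℝ)) ≤ Real.cos (21 * (2.9095:ℝ)) ∧ Real.cos (21 * (2.9095:ℝ)) ≤ ((-159545321905701/1000000000000000:ℝ)) := by rw [e21]; exact ⟨by linarith only [p21.1, hK19.2], by linarith only [p21.2, hK19.1]⟩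
  have qs := sin_ival (m := (5819/160000:ℝ)) (E := (45559849/500000000000000:ℝ)) (by norm_num : ((5819/160000:ℝ)) ≤ ((2.9095:ℝ) / 10)/8) (by norm_num : ((2.9095:ℝ) / 10)/8 ≤ ((5819/160000:ℝ))) (by norm_num) (by norm_num) (by norm_num) (by norm_num)
  have qsl : ((18180320737183/500000000000000:ℝ)) ≤ Real.sin (((2.9095:ℝ) / 10)/8) := by linarith only [qs.1, (by norm_num : ((18180320737183/500000000000000:ℝ)) ≤ ((5819/160000:ℝ)) - ((5819/160000:ℝ))^3/6 - ((45559849/500000000000000:ℝ)))]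
  have qsu : Real.sin (((2.9095:ℝ) / 10)/8) ≤ ((36360823713763/1000000000000000:ℝ)) := by linarith only [qs.2, (by norm_num : ((5819/160000:ℝ)) - ((5819/160000:ℝ))^3/6 + ((45559849/500000000000000:ℝ)) ≤ ((36360823713763/1000000000000000:ℝ)))]
  have qc4 := cos_from_sin (show ((2.9095:ℝ) / 10)/4 = 2*(((2.9095:ℝ) / 10)/8) by ring) qsl qsu (by norm_num) (by norm_num) (Or.inl ⟨by norm_num, by norm_num⟩) (show ((62334736312357/62500000000000:ℝ)) ≤ 1-2*((165263687643/125000000000000:ℝ)) by norm_num) (show 1-2*((1322096248427/1000000000000000:ℝ)) ≤ ((498677903751573/500000000000000:ℝ)) by norm_num)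
  have qc2 := cos_dbl (show ((2.9095:ℝ) / 10)/2 = 2*(((2.9095:ℝ) / 10)/4) by ring) qc4.1 qc4.2 (by norm_num) (by norm_num) (Or.inl ⟨by norm_num, by norm_num⟩) (show ((123679638472389/125000000000000:ℝ)) ≤ 2*((248679638472389/250000000000000:ℝ))-1 by norm_num) (show 2*((994718606760253/1000000000000000:ℝ))-1 ≤ ((494718606760253/500000000000000:ℝ)) by norm_num)
  have qc1 := cos_dbl (show ((2.9095:ℝ) / 10) = 2*(((2.9095:ℝ) / 10)/2) by ring) qc2.1 qc2.2 (by norm_num) (by norm_num) (Or.inl ⟨by norm_num, by norm_num⟩) (show ((239492895125147/250000000000000:ℝ)) ≤ 2*((489492895125147/500000000000000:ℝ))-1 by norm_num) (show 2*((122373249937403/125000000000000:ℝ))-1 ≤ ((59873249937403/62500000000000:ℝ)) by norm_num)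
  rw [dExpand]
  linarith only [hK1.1, hK1.2, hK2.1, hK2.2, hK3.1, hK3.2, hK4.1, hK4.2, hK5.1, hK5.2, hK6.1, hK6.2, hK7.1, hK7.2, hK8.1, hK8.2, hK9.1, hK9.2, hK10.1, hK10.2, hK11.1, hK11.2, hK12.1, hK12.2, hK13.1, hK13.2, hK14.1, hK14.2, hK15.1, hK15.2, hK16.1, hK16.2, hK17.1, hK17.2, hK18.1, hK18.2, hK19.1, hK19.2, hK20.1, hK20.2, hK21.1, hK21.2, qc1.1]



set_option maxHeartbeats 1000000 in

private lemma pt2 : Δ ((2.9138:ℝ)) > ((118519499299881/125000000000000:ℝ)) := by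
  have hpl := Real.pi_gt_d20
  have hpu := Real.pi_lt_d20
  obtain ⟨r, hr⟩ : ∃ y:ℝ, (2.9138:ℝ) - π = y := ⟨_, rfl⟩
  have hRl : ((-113896326794897/500000000000000:ℝ)) ≤ r := by rw [← hr]; linarith only [hpu]
  have hRu : r ≤ ((-227792653589793/1000000000000000:ℝ)) := by rw [← hr]; linarith only [hpl]
  have es := sin_ival (m := (1779630106171/1000000000000000:ℝ)) (E := (523/1000000000000000:ℝ)) (by linarith only [hRl] : ((-1779630106171/1000000000000000:ℝ)) ≤ (r)/128) (by linarith only [hRu] : (r)/128 ≤ ((-177963010617/100000000000000:ℝ))) (by norm_num) (by norm_num) (by norm_num) (by norm_num)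
  have esl : ((-889814583661/500000000000000:ℝ)) ≤ Real.sin ((r)/128) := by linarith only [es.1, (by norm_num : ((-889814583661/500000000000000:ℝ)) ≤ ((-1779630106171/1000000000000000:ℝ)) - ((-177963010617/100000000000000:ℝ))^3/6 - ((523/1000000000000000:ℝ)))]
  have esu : Real.sin ((r)/128) ≤ ((-889814583137/500000000000000:ℝ)) := by linarith only [es.2, (by norm_num : ((-177963010617/100000000000000:ℝ)) - ((-1779630106171/1000000000000000:ℝ))^3/6 + ((523/1000000000000000:ℝ)) ≤ ((-889814583137/500000000000000:ℝ)))]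
  have ec64 := cos_from_sin (show (r)/64 = 2*((r)/128) by ring) esl esu (by norm_num) (by norm_num) (Or.inr (Or.inl ⟨by norm_num, by norm_num⟩)) (show ((249998416460013/250000000000000:ℝ)) ≤ 1-2*((1583539987/500000000000000:ℝ)) by norm_num) (show 1-2*((3167079969/1000000000000000:ℝ)) ≤ ((499996832920031/500000000000000:ℝ)) by norm_num)
  have ec32 := cos_dbl (show (r)/32 = 2*((r)/64) by ring) ec64.1 ec64.2 (by norm_num) (by norm_num) (Or.inl ⟨by norm_num, by norm_num⟩) (show ((19999493268809/20000000000000:ℝ)) ≤ 2*((39999493268809/40000000000000:ℝ))-1 by norm_num) (show 2*((499993665860123/500000000000000:ℝ))-1 ≤ ((249993665860123/250000000000000:ℝ)) by norm_num)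
  have ec16 := cos_dbl (show (r)/16 = 2*((r)/32) by ring) ec32.1 ec32.2 (by norm_num) (by norm_num) (Or.inl ⟨by norm_num, by norm_num⟩) (show ((499949327522841/500000000000000:ℝ)) ≤ 2*((999949327522841/1000000000000000:ℝ))-1 by norm_num) (show 2*((499974663761463/500000000000000:ℝ))-1 ≤ ((249974663761463/250000000000000:ℝ)) by norm_num)
  have ec8 := cos_dbl (show (r)/8 = 2*((r)/16) by ring) ec16.1 ec16.2 (by norm_num) (by norm_num) (Or.inl ⟨by norm_num, by norm_num⟩) (show ((499797320362163/500000000000000:ℝ)) ≤ 2*((999797320362163/1000000000000000:ℝ))-1 by norm_num) (show 2*((124974665045313/125000000000000:ℝ))-1 ≤ ((62474665045313/62500000000000:ℝ)) by norm_num)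
  have ec4 := cos_dbl (show (r)/4 = 2*((r)/8) by ring) ec8.1 ec8.2 (by norm_num) (by norm_num) (Or.inl ⟨by norm_num, by norm_num⟩) (show ((249594722882397/250000000000000:ℝ)) ≤ 2*((499594722882397/500000000000000:ℝ))-1 by norm_num) (show 2*((499594722883079/500000000000000:ℝ))-1 ≤ ((249594722883079/250000000000000:ℝ)) by norm_num)
  have ec2 := cos_dbl (show (r)/2 = 2*((r)/4) by ring) ec4.1 ec4.2 (by norm_num) (by norm_num) (Or.inl ⟨by norm_num, by norm_num⟩) (show ((62095051381481/62500000000000:ℝ)) ≤ 2*((124595051381481/125000000000000:ℝ))-1 by norm_num) (show 2*((62297525691081/62500000000000:ℝ))-1 ≤ ((31047525691081/31250000000000:ℝ)) by norm_num)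
  have ec1 := cos_dbl (show (r) = 2*((r)/2) by ring) ec2.1 ec2.2 (by norm_num) (by norm_num) (Or.inl ⟨by norm_num, by norm_num⟩) (show ((487083623953603/500000000000000:ℝ)) ≤ 2*((987083623953603/1000000000000000:ℝ))-1 by norm_num) (show 2*((197416724795051/200000000000000:ℝ))-1 ≤ ((97416724795051/100000000000000:ℝ)) by norm_num)
  have hid : Real.cos ((2.9138:ℝ)) = -Real.cos r := by rw [show ((2.9138:ℝ):ℝ) = r + π by rw [← hr]; ring, Real.cos_add_pi]
  have hK1 : ((-97416724795051/100000000000000:ℝ)) ≤ Real.cos ((2.9138:ℝ)) ∧ Real.cos ((2.9138:ℝ)) ≤ ((-487083623953603/500000000000000:ℝ)) := by rw [hid]; exact ⟨by linarith only [ec1.2], by linarith only [ec1.1]⟩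
  have s2 := sq_ival (m := (949001826895099/1000000000000000:ℝ)) (M := (949001826979471/1000000000000000:ℝ)) hK1.1 hK1.2 (by norm_num) (by norm_num) (Or.inr (Or.inl ⟨by norm_num, by norm_num⟩))
  have e2 : Real.cos (2 * (2.9138:ℝ)) = 2 * Real.cos ((2.9138:ℝ)) ^ 2 - 1 := by have h := Real.cos_two_mul ((2.9138:ℝ)); rw [show 2 * ((2.9138:ℝ):ℝ) = 2 * (2.9138:ℝ) by norm_num] at h; exact h
  have hK2 : ((449001826895099/500000000000000:ℝ)) ≤ Real.cos (2 * (2.9138:ℝ)) ∧ Real.cos (2 * (2.9138:ℝ)) ≤ ((449001826979471/500000000000000:ℝ)) := by rw [e2]; exact ⟨by linarith only [s2.1], by linarith only [s2.2]⟩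
  have p3 := mul_nn hK1.1 hK1.2 (by norm_num) hK2.1 (by norm_num) hK2.2
  have e3 : Real.cos (3 * (2.9138:ℝ)) = 2 * Real.cos ((2.9138:ℝ)) * Real.cos (2 * (2.9138:ℝ)) - Real.cos ((2.9138:ℝ)) := by have h := cosrec (2 * (2.9138:ℝ)) ((2.9138:ℝ)); rw [show (2 * (2.9138:ℝ)) + (2.9138:ℝ) = 3 * (2.9138:ℝ) by norm_num, show (2 * (2.9138:ℝ)) - (2.9138:ℝ) = (2.9138:ℝ) by norm_num] at h; linarith only [h]
  have hK3 : ((-193861062136541/250000000000000:ℝ)) ≤ Real.cos (3 * (2.9138:ℝ)) ∧ Real.cos (3 * (2.9138:ℝ)) ≤ ((-155088849619263/200000000000000:ℝ)) := by rw [e3]; exact ⟨by linarith only [p3.1, hK1.2], by linarith only [p3.2, hK1.1]⟩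
  have p4 := mul_np hK1.1 hK1.2 (by norm_num) hK3.1 hK3.2 (by norm_num)
  have e4 : Real.cos (4 * (2.9138:ℝ)) = 2 * Real.cos ((2.9138:ℝ)) * Real.cos (3 * (2.9138:ℝ)) - Real.cos (2 * (2.9138:ℝ)) := by have h := cosrec (3 * (2.9138:ℝ)) ((2.9138:ℝ)); rw [show (3 * (2.9138:ℝ)) + (2.9138:ℝ) = 4 * (2.9138:ℝ) by norm_num, show (3 * (2.9138:ℝ)) - (2.9138:ℝ) = 2 * (2.9138:ℝ) by norm_num] at h; linarith only [h]
  have hK4 : ((612821124187977/1000000000000000:ℝ)) ≤ Real.cos (4 * (2.9138:ℝ)) ∧ Real.cos (4 * (2.9138:ℝ)) ≤ ((306410562650169/500000000000000:ℝ)) := by rw [e4]; exact ⟨by linarith only [p4.1, hK2.2], by linarith only [p4.2, hK2.1]⟩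
  have p5 := mul_nn hK1.1 hK1.2 (by norm_num) hK4.1 (by norm_num) hK4.2
  have e5 : Real.cos (5 * (2.9138:ℝ)) = 2 * Real.cos ((2.9138:ℝ)) * Real.cos (4 * (2.9138:ℝ)) - Real.cos (3 * (2.9138:ℝ)) := by have h := cosrec (4 * (2.9138:ℝ)) ((2.9138:ℝ)); rw [show (4 * (2.9138:ℝ)) + (2.9138:ℝ) = 5 * (2.9138:ℝ) by norm_num, show (4 * (2.9138:ℝ)) - (2.9138:ℝ) = 3 * (2.9138:ℝ) by norm_num] at h; linarith only [h]
  have hK5 : ((-83707258028643/200000000000000:ℝ)) ≤ Real.cos (5 * (2.9138:ℝ)) ∧ Real.cos (5 * (2.9138:ℝ)) ≤ ((-418536287473039/1000000000000000:ℝ)) := by rw [e5]; exact ⟨by linarith only [p5.1, hK3.2], by linarith only [p5.2, hK3.1]⟩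
  have p6 := mul_np hK1.1 hK1.2 (by norm_num) hK5.1 hK5.2 (by norm_num)
  have e6 : Real.cos (6 * (2.9138:ℝ)) = 2 * Real.cos ((2.9138:ℝ)) * Real.cos (5 * (2.9138:ℝ)) - Real.cos (4 * (2.9138:ℝ)) := by have h := cosrec (5 * (2.9138:ℝ)) ((2.9138:ℝ)); rw [show (5 * (2.9138:ℝ)) + (2.9138:ℝ) = 6 * (2.9138:ℝ) by norm_num, show (5 * (2.9138:ℝ)) - (2.9138:ℝ) = 4 * (2.9138:ℝ) by norm_num] at h; linarith only [h]
  have hK6 : ((202627561333481/1000000000000000:ℝ)) ≤ Real.cos (6 * (2.9138:ℝ)) ∧ Real.cos (6 * (2.9138:ℝ)) ≤ ((202627567684487/1000000000000000:ℝ)) := by rw [e6]; exact ⟨by linarith only [p6.1, hK4.2], by linarith only [p6.2, hK4.1]⟩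
  have p7 := mul_nn hK1.1 hK1.2 (by norm_num) hK6.1 (by norm_num) hK6.2
  have e7 : Real.cos (7 * (2.9138:ℝ)) = 2 * Real.cos ((2.9138:ℝ)) * Real.cos (6 * (2.9138:ℝ)) - Real.cos (5 * (2.9138:ℝ)) := by have h := cosrec (6 * (2.9138:ℝ)) ((2.9138:ℝ)); rw [show (6 * (2.9138:ℝ)) + (2.9138:ℝ) = 7 * (2.9138:ℝ) by norm_num, show (6 * (2.9138:ℝ)) - (2.9138:ℝ) = 5 * (2.9138:ℝ) by norm_num] at h; linarith only [h]
  have hK7 : ((11875003766417/500000000000000:ℝ)) ≤ Real.cos (7 * (2.9138:ℝ)) ∧ Real.cos (7 * (2.9138:ℝ)) ≤ ((5937505648611/250000000000000:ℝ)) := by rw [e7]; exact ⟨by linarith only [p7.1, hK5.2], by linarith only [p7.2, hK5.1]⟩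
  have p8 := mul_nn hK1.1 hK1.2 (by norm_num) hK7.1 (by norm_num) hK7.2
  have e8 : Real.cos (8 * (2.9138:ℝ)) = 2 * Real.cos ((2.9138:ℝ)) * Real.cos (7 * (2.9138:ℝ)) - Real.cos (6 * (2.9138:ℝ)) := by have h := cosrec (7 * (2.9138:ℝ)) ((2.9138:ℝ)); rw [show (7 * (2.9138:ℝ)) + (2.9138:ℝ) = 8 * (2.9138:ℝ) by norm_num, show (7 * (2.9138:ℝ)) - (2.9138:ℝ) = 6 * (2.9138:ℝ) by norm_num] at h; linarith only [h]
  have hK8 : ((-248900555983671/1000000000000000:ℝ)) ≤ Real.cos (8 * (2.9138:ℝ)) ∧ Real.cos (8 * (2.9138:ℝ)) ≤ ((-248900520285553/1000000000000000:ℝ)) := by rw [e8]; exact ⟨by linarith only [p8.1, hK6.2], by linarith only [p8.2, hK6.1]⟩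
  have p9 := mul_np hK1.1 hK1.2 (by norm_num) hK8.1 hK8.2 (by norm_num)
  have e9 : Real.cos (9 * (2.9138:ℝ)) = 2 * Real.cos ((2.9138:ℝ)) * Real.cos (8 * (2.9138:ℝ)) - Real.cos (7 * (2.9138:ℝ)) := by have h := cosrec (8 * (2.9138:ℝ)) ((2.9138:ℝ)); rw [show (8 * (2.9138:ℝ)) + (2.9138:ℝ) = 9 * (2.9138:ℝ) by norm_num, show (8 * (2.9138:ℝ)) - (2.9138:ℝ) = 7 * (2.9138:ℝ) by norm_num] at h; linarith only [h]
  have hK9 : ((461191447104053/1000000000000000:ℝ)) ≤ Real.cos (9 * (2.9138:ℝ)) ∧ Real.cos (9 * (2.9138:ℝ)) ≤ ((57648941467387/125000000000000:ℝ)) := by rw [e9]; exact ⟨by linarith only [p9.1, hK7.2], by linarith only [p9.2, hK7.1]⟩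
  have p10 := mul_nn hK1.1 hK1.2 (by norm_num) hK9.1 (by norm_num) hK9.2
  have e10 : Real.cos (10 * (2.9138:ℝ)) = 2 * Real.cos ((2.9138:ℝ)) * Real.cos (9 * (2.9138:ℝ)) - Real.cos (8 * (2.9138:ℝ)) := by have h := cosrec (9 * (2.9138:ℝ)) ((2.9138:ℝ)); rw [show (9 * (2.9138:ℝ)) + (2.9138:ℝ) = 10 * (2.9138:ℝ) by norm_num, show (9 * (2.9138:ℝ)) - (2.9138:ℝ) = 8 * (2.9138:ℝ) by norm_num] at h; linarith only [h]
  have hK10 : ((-324827425109579/500000000000000:ℝ)) ≤ Real.cos (10 * (2.9138:ℝ)) ∧ Real.cos (10 * (2.9138:ℝ)) ≤ ((-649654649583723/1000000000000000:ℝ)) := by rw [e10]; exact ⟨by linarith only [p10.1, hK8.2], by linarith only [p10.2, hK8.1]⟩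
  have p11 := mul_np hK1.1 hK1.2 (by norm_num) hK10.1 hK10.2 (by norm_num)
  have e11 : Real.cos (11 * (2.9138:ℝ)) = 2 * Real.cos ((2.9138:ℝ)) * Real.cos (10 * (2.9138:ℝ)) - Real.cos (9 * (2.9138:ℝ)) := by have h := cosrec (10 * (2.9138:ℝ)) ((2.9138:ℝ)); rw [show (10 * (2.9138:ℝ)) + (2.9138:ℝ) = 11 * (2.9138:ℝ) by norm_num, show (10 * (2.9138:ℝ)) - (2.9138:ℝ) = 9 * (2.9138:ℝ) by norm_num] at h; linarith only [h]
  have hK11 : ((160910606482219/200000000000000:ℝ)) ≤ Real.cos (11 * (2.9138:ℝ)) ∧ Real.cos (11 * (2.9138:ℝ)) ≤ ((804553508007343/1000000000000000:ℝ)) := by rw [e11]; exact ⟨by linarith only [p11.1, hK9.2], by linarith only [p11.2, hK9.1]⟩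
  have p12 := mul_nn hK1.1 hK1.2 (by norm_num) hK11.1 (by norm_num) hK11.2
  have e12 : Real.cos (12 * (2.9138:ℝ)) = 2 * Real.cos ((2.9138:ℝ)) * Real.cos (11 * (2.9138:ℝ)) - Real.cos (10 * (2.9138:ℝ)) := by have h := cosrec (11 * (2.9138:ℝ)) ((2.9138:ℝ)); rw [show (11 * (2.9138:ℝ)) + (2.9138:ℝ) = 12 * (2.9138:ℝ) by norm_num, show (11 * (2.9138:ℝ)) - (2.9138:ℝ) = 10 * (2.9138:ℝ) by norm_num] at h; linarith only [h]
  have hK12 : ((-917884703865161/1000000000000000:ℝ)) ≤ Real.cos (12 * (2.9138:ℝ)) ∧ Real.cos (12 * (2.9138:ℝ)) ≤ ((-917883576539469/1000000000000000:ℝ)) := by rw [e12]; exact ⟨by linarith only [p12.1, hK10.2], by linarith only [p12.2, hK10.1]⟩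
  have p13 := mul_np hK1.1 hK1.2 (by norm_num) hK12.1 hK12.2 (by norm_num)
  have e13 : Real.cos (13 * (2.9138:ℝ)) = 2 * Real.cos ((2.9138:ℝ)) * Real.cos (12 * (2.9138:ℝ)) - Real.cos (11 * (2.9138:ℝ)) := by have h := cosrec (12 * (2.9138:ℝ)) ((2.9138:ℝ)); rw [show (12 * (2.9138:ℝ)) + (2.9138:ℝ) = 13 * (2.9138:ℝ) by norm_num, show (12 * (2.9138:ℝ)) - (2.9138:ℝ) = 11 * (2.9138:ℝ) by norm_num] at h; linarith only [h]
  have hK13 : ((245947681826503/250000000000000:ℝ)) ≤ Real.cos (13 * (2.9138:ℝ)) ∧ Real.cos (13 * (2.9138:ℝ)) ≤ ((983793399389291/1000000000000000:ℝ)) := by rw [e13]; exact ⟨by linarith only [p13.1, hK11.2], by linarith only [p13.2, hK11.1]⟩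
  have p14 := mul_nn hK1.1 hK1.2 (by norm_num) hK13.1 (by norm_num) hK13.2
  have e14 : Real.cos (14 * (2.9138:ℝ)) = 2 * Real.cos ((2.9138:ℝ)) * Real.cos (13 * (2.9138:ℝ)) - Real.cos (12 * (2.9138:ℝ)) := by have h := cosrec (13 * (2.9138:ℝ)) ((2.9138:ℝ)); rw [show (13 * (2.9138:ℝ)) + (2.9138:ℝ) = 14 * (2.9138:ℝ) by norm_num, show (13 * (2.9138:ℝ)) - (2.9138:ℝ) = 12 * (2.9138:ℝ) by norm_num] at h; linarith only [h]
  have hK14 : ((-998875040330417/1000000000000000:ℝ)) ≤ Real.cos (14 * (2.9138:ℝ)) ∧ Real.cos (14 * (2.9138:ℝ)) ≤ ((-998868706807491/1000000000000000:ℝ)) := by rw [e14]; exact ⟨by linarith only [p14.1, hK12.2], by linarith only [p14.2, hK12.1]⟩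
  have p15 := mul_np hK1.1 hK1.2 (by norm_num) hK14.1 hK14.2 (by norm_num)
  have e15 : Real.cos (15 * (2.9138:ℝ)) = 2 * Real.cos ((2.9138:ℝ)) * Real.cos (14 * (2.9138:ℝ)) - Real.cos (13 * (2.9138:ℝ)) := by have h := cosrec (14 * (2.9138:ℝ)) ((2.9138:ℝ)); rw [show (14 * (2.9138:ℝ)) + (2.9138:ℝ) = 15 * (2.9138:ℝ) by norm_num, show (14 * (2.9138:ℝ)) - (2.9138:ℝ) = 13 * (2.9138:ℝ) by norm_num] at h; linarith only [h]
  have hK15 : ((38493478354931/40000000000000:ℝ)) ≤ Real.cos (15 * (2.9138:ℝ)) ∧ Real.cos (15 * (2.9138:ℝ)) ≤ ((962351970864263/1000000000000000:ℝ)) := by rw [e15]; exact ⟨by linarith only [p15.1, hK13.2], by linarith only [p15.2, hK13.1]⟩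
  have p16 := mul_nn hK1.1 hK1.2 (by norm_num) hK15.1 (by norm_num) hK15.2
  have e16 : Real.cos (16 * (2.9138:ℝ)) = 2 * Real.cos ((2.9138:ℝ)) * Real.cos (15 * (2.9138:ℝ)) - Real.cos (14 * (2.9138:ℝ)) := by have h := cosrec (15 * (2.9138:ℝ)) ((2.9138:ℝ)); rw [show (15 * (2.9138:ℝ)) + (2.9138:ℝ) = 16 * (2.9138:ℝ) by norm_num, show (15 * (2.9138:ℝ)) - (2.9138:ℝ) = 14 * (2.9138:ℝ) by norm_num] at h; linarith only [h]
  have hK16 : ((-438057417612843/500000000000000:ℝ)) ≤ Real.cos (16 * (2.9138:ℝ)) ∧ Real.cos (16 * (2.9138:ℝ)) ≤ ((-876079253239519/1000000000000000:ℝ)) := by rw [e16]; exact ⟨by linarith only [p16.1, hK14.2], by linarith only [p16.2, hK14.1]⟩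
  have p17 := mul_np hK1.1 hK1.2 (by norm_num) hK16.1 hK16.2 (by norm_num)
  have e17 : Real.cos (17 * (2.9138:ℝ)) = 2 * Real.cos ((2.9138:ℝ)) * Real.cos (16 * (2.9138:ℝ)) - Real.cos (15 * (2.9138:ℝ)) := by have h := cosrec (16 * (2.9138:ℝ)) ((2.9138:ℝ)); rw [show (16 * (2.9138:ℝ)) + (2.9138:ℝ) = 17 * (2.9138:ℝ) by norm_num, show (16 * (2.9138:ℝ)) - (2.9138:ℝ) = 15 * (2.9138:ℝ) by norm_num] at h; linarith only [h]
  have hK17 : ((744543459289621/1000000000000000:ℝ)) ≤ Real.cos (17 * (2.9138:ℝ)) ∧ Real.cos (17 * (2.9138:ℝ)) ≤ ((46539237310473/62500000000000:ℝ)) := by rw [e17]; exact ⟨by linarith only [p17.1, hK15.2], by linarith only [p17.2, hK15.1]⟩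
  have p18 := mul_nn hK1.1 hK1.2 (by norm_num) hK17.1 (by norm_num) hK17.2
  have e18 : Real.cos (18 * (2.9138:ℝ)) = 2 * Real.cos ((2.9138:ℝ)) * Real.cos (17 * (2.9138:ℝ)) - Real.cos (16 * (2.9138:ℝ)) := by have h := cosrec (17 * (2.9138:ℝ)) ((2.9138:ℝ)); rw [show (17 * (2.9138:ℝ)) + (2.9138:ℝ) = 18 * (2.9138:ℝ) by norm_num, show (17 * (2.9138:ℝ)) - (2.9138:ℝ) = 16 * (2.9138:ℝ) by norm_num] at h; linarith only [h]
  have hK18 : ((-22988190807967/40000000000000:ℝ)) ≤ Real.cos (18 * (2.9138:ℝ)) ∧ Real.cos (18 * (2.9138:ℝ)) ≤ ((-22980194805651/40000000000000:ℝ)) := by rw [e18]; exact ⟨by linarith only [p18.1, hK16.2], by linarith only [p18.2, hK16.1]⟩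
  have p19 := mul_np hK1.1 hK1.2 (by norm_num) hK18.1 hK18.2 (by norm_num)
  have e19 : Real.cos (19 * (2.9138:ℝ)) = 2 * Real.cos ((2.9138:ℝ)) * Real.cos (18 * (2.9138:ℝ)) - Real.cos (17 * (2.9138:ℝ)) := by have h := cosrec (18 * (2.9138:ℝ)) ((2.9138:ℝ)); rw [show (18 * (2.9138:ℝ)) + (2.9138:ℝ) = 19 * (2.9138:ℝ) by norm_num, show (18 * (2.9138:ℝ)) - (2.9138:ℝ) = 17 * (2.9138:ℝ) by norm_num] at h; linarith only [h]
  have hK19 : ((374699859542057/1000000000000000:ℝ)) ≤ Real.cos (19 * (2.9138:ℝ)) ∧ Real.cos (19 * (2.9138:ℝ)) ≤ ((375173669448301/1000000000000000:ℝ)) := by rw [e19]; exact ⟨by linarith only [p19.1, hK17.2], by linarith only [p19.2, hK17.1]⟩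
  have p20 := mul_nn hK1.1 hK1.2 (by norm_num) hK19.1 (by norm_num) hK19.2
  have e20 : Real.cos (20 * (2.9138:ℝ)) = 2 * Real.cos ((2.9138:ℝ)) * Real.cos (19 * (2.9138:ℝ)) - Real.cos (18 * (2.9138:ℝ)) := by have h := cosrec (19 * (2.9138:ℝ)) ((2.9138:ℝ)); rw [show (19 * (2.9138:ℝ)) + (2.9138:ℝ) = 20 * (2.9138:ℝ) by norm_num, show (19 * (2.9138:ℝ)) - (2.9138:ℝ) = 18 * (2.9138:ℝ) by norm_num] at h; linarith only [h]
  have hK20 : ((-156458931998617/1000000000000000:ℝ)) ≤ Real.cos (20 * (2.9138:ℝ)) ∧ Real.cos (20 * (2.9138:ℝ)) ≤ ((-155335891723429/1000000000000000:ℝ)) := by rw [e20]; exact ⟨by linarith only [p20.1, hK18.2], by linarith only [p20.2, hK18.1]⟩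
  have p21 := mul_np hK1.1 hK1.2 (by norm_num) hK20.1 hK20.2 (by norm_num)
  have e21 : Real.cos (21 * (2.9138:ℝ)) = 2 * Real.cos ((2.9138:ℝ)) * Real.cos (20 * (2.9138:ℝ)) - Real.cos (19 * (2.9138:ℝ)) := by have h := cosrec (20 * (2.9138:ℝ)) ((2.9138:ℝ)); rw [show (20 * (2.9138:ℝ)) + (2.9138:ℝ) = 21 * (2.9138:ℝ) by norm_num, show (20 * (2.9138:ℝ)) - (2.9138:ℝ) = 19 * (2.9138:ℝ) by norm_num] at h; linarith only [h]
  have hK21 : ((-18131848291363/250000000000000:ℝ)) ≤ Real.cos (21 * (2.9138:ℝ)) ∧ Real.cos (21 * (2.9138:ℝ)) ≤ ((-69865525137319/1000000000000000:ℝ)) := by rw [e21]; exact ⟨by linarith only [p21.1, hK19.2], by linarith only [p21.2, hK19.1]⟩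
  have qs := sin_ival (m := (14569/400000:ℝ)) (E := (91659563/1000000000000000:ℝ)) (by norm_num : ((14569/400000:ℝ)) ≤ ((2.9138:ℝ) / 10)/8) (by norm_num : ((2.9138:ℝ) / 10)/8 ≤ ((14569/400000:ℝ))) (by norm_num) (by norm_num) (by norm_num) (by norm_num)
  have qsl : ((18207177667377/500000000000000:ℝ)) ≤ Real.sin (((2.9138:ℝ) / 10)/8) := by linarith only [qs.1, (by norm_num : ((18207177667377/500000000000000:ℝ)) ≤ ((14569/400000:ℝ)) - ((14569/400000:ℝ))^3/6 - ((91659563/1000000000000000:ℝ)))]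
  have qsu : Real.sin (((2.9138:ℝ) / 10)/8) ≤ ((36414538653881/1000000000000000:ℝ)) := by linarith only [qs.2, (by norm_num : ((14569/400000:ℝ)) - ((14569/400000:ℝ))^3/6 + ((91659563/1000000000000000:ℝ)) ≤ ((36414538653881/1000000000000000:ℝ)))]
  have qc4 := cos_from_sin (show ((2.9138:ℝ) / 10)/4 = 2*(((2.9138:ℝ) / 10)/8) by ring) qsl qsu (by norm_num) (by norm_num) (Or.inl ⟨by norm_num, by norm_num⟩) (show ((3989391850997/4000000000000:ℝ)) ≤ 1-2*((10608149003/8000000000000:ℝ)) by norm_num) (show 1-2*((265201054889/200000000000000:ℝ)) ≤ ((99734798945111/100000000000000:ℝ)) by norm_num)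
  have qc2 := cos_dbl (show ((2.9138:ℝ) / 10)/2 = 2*(((2.9138:ℝ) / 10)/4) by ring) qc4.1 qc4.2 (by norm_num) (by norm_num) (Or.inl ⟨by norm_num, by norm_num⟩) (show ((494702958800079/500000000000000:ℝ)) ≤ 2*((994702958800079/1000000000000000:ℝ))-1 by norm_num) (show 2*((248675753015543/250000000000000:ℝ))-1 ≤ ((123675753015543/125000000000000:ℝ)) by norm_num)
  have qc1 := cos_dbl (show ((2.9138:ℝ) / 10) = 2*(((2.9138:ℝ) / 10)/2) by ring) qc2.1 qc2.2 (by norm_num) (by norm_num) (Or.inl ⟨by norm_num, by norm_num⟩) (show ((47892406978221/50000000000000:ℝ)) ≤ 2*((97892406978221/100000000000000:ℝ))-1 by norm_num) (show 2*((489462140286771/500000000000000:ℝ))-1 ≤ ((239462140286771/250000000000000:ℝ)) by norm_num)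
  rw [dExpand]
  linarith only [hK1.1, hK1.2, hK2.1, hK2.2, hK3.1, hK3.2, hK4.1, hK4.2, hK5.1, hK5.2, hK6.1, hK6.2, hK7.1, hK7.2, hK8.1, hK8.2, hK9.1, hK9.2, hK10.1, hK10.2, hK11.1, hK11.2, hK12.1, hK12.2, hK13.1, hK13.2, hK14.1, hK14.2, hK15.1, hK15.2, hK16.1, hK16.2, hK17.1, hK17.2, hK18.1, hK18.2, hK19.1, hK19.2, hK20.1, hK20.2, hK21.1, hK21.2, qc1.1]



set_option maxHeartbeats 1000000 in

private lemma pt3 : Δ ((2.9222:ℝ)) > ((995604437035053/1000000000000000:ℝ)) := by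
  have hpl := Real.pi_gt_d20
  have hpu := Real.pi_lt_d20
  obtain ⟨r, hr⟩ : ∃ y:ℝ, (2.9222:ℝ) - π = y := ⟨_, rfl⟩
  have hRl : ((-109696326794897/500000000000000:ℝ)) ≤ r := by rw [← hr]; linarith only [hpu]
  have hRu : r ≤ ((-219392653589793/1000000000000000:ℝ)) := by rw [← hr]; linarith only [hpl]
  have es := sin_ival (m := (1714005106171/1000000000000000:ℝ)) (E := (9/20000000000000:ℝ)) (by linarith only [hRl] : ((-1714005106171/1000000000000000:ℝ)) ≤ (r)/128) (by linarith only [hRu] : (r)/128 ≤ ((-171400510617/100000000000000:ℝ))) (by norm_num) (by norm_num) (by norm_num) (by norm_num)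
  have esl : ((-214250533423/125000000000000:ℝ)) ≤ Real.sin ((r)/128) := by linarith only [es.1, (by norm_num : ((-214250533423/125000000000000:ℝ)) ≤ ((-1714005106171/1000000000000000:ℝ)) - ((-171400510617/100000000000000:ℝ))^3/6 - ((9/20000000000000:ℝ)))]
  have esu : Real.sin ((r)/128) ≤ ((-857002133241/500000000000000:ℝ)) := by linarith only [es.2, (by norm_num : ((-171400510617/100000000000000:ℝ)) - ((-1714005106171/1000000000000000:ℝ))^3/6 + ((9/20000000000000:ℝ)) ≤ ((-857002133241/500000000000000:ℝ)))]
  have ec64 := cos_from_sin (show (r)/64 = 2*((r)/128) by ring) esl esu (by norm_num) (by norm_num) (Or.inr (Or.inl ⟨by norm_num, by norm_num⟩)) (show ((499997062189371/500000000000000:ℝ)) ≤ 1-2*((2937810629/1000000000000000:ℝ)) by norm_num) (show 1-2*((4700497/1600000000000:ℝ)) ≤ ((799995299503/800000000000:ℝ)) by norm_num)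
  have ec32 := cos_dbl (show (r)/32 = 2*((r)/64) by ring) ec64.1 ec64.2 (by norm_num) (by norm_num) (Or.inl ⟨by norm_num, by norm_num⟩) (show ((249994124396003/250000000000000:ℝ)) ≤ 2*((499994124396003/500000000000000:ℝ))-1 by norm_num) (show 2*((999988248792023/1000000000000000:ℝ))-1 ≤ ((499988248792023/500000000000000:ℝ)) by norm_num)
  have ec16 := cos_dbl (show (r)/16 = 2*((r)/32) by ring) ec32.1 ec32.2 (by norm_num) (by norm_num) (Or.inl ⟨by norm_num, by norm_num⟩) (show ((499952995720387/500000000000000:ℝ)) ≤ 2*((999952995720387/1000000000000000:ℝ))-1 by norm_num) (show 2*((124994124465057/125000000000000:ℝ))-1 ≤ ((62494124465057/62500000000000:ℝ)) by norm_num)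
  have ec8 := cos_dbl (show (r)/8 = 2*((r)/16) by ring) ec16.1 ec16.2 (by norm_num) (by norm_num) (Or.inl ⟨by norm_num, by norm_num⟩) (show ((499811991719157/500000000000000:ℝ)) ≤ 2*((999811991719157/1000000000000000:ℝ))-1 by norm_num) (show 2*((499905995859717/500000000000000:ℝ))-1 ≤ ((249905995859717/250000000000000:ℝ)) by norm_num)
  have ec4 := cos_dbl (show (r)/4 = 2*((r)/8) by ring) ec8.1 ec8.2 (by norm_num) (by norm_num) (Or.inl ⟨by norm_num, by norm_num⟩) (show ((249624054132541/250000000000000:ℝ)) ≤ 2*((499624054132541/500000000000000:ℝ))-1 by norm_num) (show 2*((999248108266191/1000000000000000:ℝ))-1 ≤ ((499248108266191/500000000000000:ℝ)) by norm_num)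
  have ec2 := cos_dbl (show (r)/2 = 2*((r)/4) by ring) ec4.1 ec4.2 (by norm_num) (by norm_num) (Or.inl ⟨by norm_num, by norm_num⟩) (show ((124248673606263/125000000000000:ℝ)) ≤ 2*((249248673606263/250000000000000:ℝ))-1 by norm_num) (show 2*((498497347214741/500000000000000:ℝ))-1 ≤ ((248497347214741/250000000000000:ℝ)) by norm_num)
  have ec1 := cos_dbl (show (r) = 2*((r)/2) by ring) ec2.1 ec2.2 (by norm_num) (by norm_num) (Or.inl ⟨by norm_num, by norm_num⟩) (show ((488014905146603/500000000000000:ℝ)) ≤ 2*((988014905146603/1000000000000000:ℝ))-1 by norm_num) (show 2*((988014905164217/1000000000000000:ℝ))-1 ≤ ((488014905164217/500000000000000:ℝ)) by norm_num)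
  have hid : Real.cos ((2.9222:ℝ)) = -Real.cos r := by rw [show ((2.9222:ℝ):ℝ) = r + π by rw [← hr]; ring, Real.cos_add_pi]
  have hK1 : ((-488014905164217/500000000000000:ℝ)) ≤ Real.cos ((2.9222:ℝ)) ∧ Real.cos ((2.9222:ℝ)) ≤ ((-488014905146603/500000000000000:ℝ)) := by rw [hid]; exact ⟨by linarith only [ec1.2], by linarith only [ec1.1]⟩
  have s2 := sq_ival (m := (952634190580991/1000000000000000:ℝ)) (M := (952634190649759/1000000000000000:ℝ)) hK1.1 hK1.2 (by norm_num) (by norm_num) (Or.inr (Or.inl ⟨by norm_num, by norm_num⟩))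
  have e2 : Real.cos (2 * (2.9222:ℝ)) = 2 * Real.cos ((2.9222:ℝ)) ^ 2 - 1 := by have h := Real.cos_two_mul ((2.9222:ℝ)); rw [show 2 * ((2.9222:ℝ):ℝ) = 2 * (2.9222:ℝ) by norm_num] at h; exact h
  have hK2 : ((452634190580991/500000000000000:ℝ)) ≤ Real.cos (2 * (2.9222:ℝ)) ∧ Real.cos (2 * (2.9222:ℝ)) ≤ ((452634190649759/500000000000000:ℝ)) := by rw [e2]; exact ⟨by linarith only [s2.1], by linarith only [s2.2]⟩
  have p3 := mul_nn hK1.1 hK1.2 (by norm_num) hK2.1 (by norm_num) hK2.2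
  have e3 : Real.cos (3 * (2.9222:ℝ)) = 2 * Real.cos ((2.9222:ℝ)) * Real.cos (2 * (2.9222:ℝ)) - Real.cos ((2.9222:ℝ)) := by have h := cosrec (2 * (2.9222:ℝ)) ((2.9222:ℝ)); rw [show (2 * (2.9222:ℝ)) + (2.9222:ℝ) = 3 * (2.9222:ℝ) by norm_num, show (2 * (2.9222:ℝ)) - (2.9222:ℝ) = (2.9222:ℝ) by norm_num] at h; linarith only [h]
  have hK3 : ((-791108042698989/1000000000000000:ℝ)) ≤ Real.cos (3 * (2.9222:ℝ)) ∧ Real.cos (3 * (2.9222:ℝ)) ≤ ((-791108042331499/1000000000000000:ℝ)) := by rw [e3]; exact ⟨by linarith only [p3.1, hK1.2], by linarith only [p3.2, hK1.1]⟩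
  have p4 := mul_np hK1.1 hK1.2 (by norm_num) hK3.1 hK3.2 (by norm_num)
  have e4 : Real.cos (4 * (2.9222:ℝ)) = 2 * Real.cos ((2.9222:ℝ)) * Real.cos (3 * (2.9222:ℝ)) - Real.cos (2 * (2.9222:ℝ)) := by have h := cosrec (3 * (2.9222:ℝ)) ((2.9222:ℝ)); rw [show (3 * (2.9222:ℝ)) + (2.9222:ℝ) = 4 * (2.9222:ℝ) by norm_num, show (3 * (2.9222:ℝ)) - (2.9222:ℝ) = 2 * (2.9222:ℝ) by norm_num] at h; linarith only [h]
  have hK4 : ((639021683656967/1000000000000000:ℝ)) ≤ Real.cos (4 * (2.9222:ℝ)) ∧ Real.cos (4 * (2.9222:ℝ)) ≤ ((159755421141901/250000000000000:ℝ)) := by rw [e4]; exact ⟨by linarith only [p4.1, hK2.2], by linarith only [p4.2, hK2.1]⟩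
  have p5 := mul_nn hK1.1 hK1.2 (by norm_num) hK4.1 (by norm_num) hK4.2
  have e5 : Real.cos (5 * (2.9222:ℝ)) = 2 * Real.cos ((2.9222:ℝ)) * Real.cos (4 * (2.9222:ℝ)) - Real.cos (3 * (2.9222:ℝ)) := by have h := cosrec (4 * (2.9222:ℝ)) ((2.9222:ℝ)); rw [show (4 * (2.9222:ℝ)) + (2.9222:ℝ) = 5 * (2.9222:ℝ) by norm_num, show (4 * (2.9222:ℝ)) - (2.9222:ℝ) = 3 * (2.9222:ℝ) by norm_num] at h; linarith only [h]
  have hK5 : ((-456300384837051/1000000000000000:ℝ)) ≤ Real.cos (5 * (2.9222:ℝ)) ∧ Real.cos (5 * (2.9222:ℝ)) ≤ ((-11407509566173/25000000000000:ℝ)) := by rw [e5]; exact ⟨by linarith only [p5.1, hK3.2], by linarith only [p5.2, hK3.1]⟩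
  have p6 := mul_np hK1.1 hK1.2 (by norm_num) hK5.1 hK5.2 (by norm_num)
  have e6 : Real.cos (6 * (2.9222:ℝ)) = 2 * Real.cos ((2.9222:ℝ)) * Real.cos (5 * (2.9222:ℝ)) - Real.cos (4 * (2.9222:ℝ)) := by have h := cosrec (5 * (2.9222:ℝ)) ((2.9222:ℝ)); rw [show (5 * (2.9222:ℝ)) + (2.9222:ℝ) = 6 * (2.9222:ℝ) by norm_num, show (5 * (2.9222:ℝ)) - (2.9222:ℝ) = 4 * (2.9222:ℝ) by norm_num] at h; linarith only [h]
  have hK6 : ((251703867255577/1000000000000000:ℝ)) ≤ Real.cos (6 * (2.9222:ℝ)) ∧ Real.cos (6 * (2.9222:ℝ)) ≤ ((25170387247363/100000000000000:ℝ)) := by rw [e6]; exact ⟨by linarith only [p6.1, hK4.2], by linarith only [p6.2, hK4.1]⟩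
  have p7 := mul_nn hK1.1 hK1.2 (by norm_num) hK6.1 (by norm_num) hK6.2
  have e7 : Real.cos (7 * (2.9222:ℝ)) = 2 * Real.cos ((2.9222:ℝ)) * Real.cos (6 * (2.9222:ℝ)) - Real.cos (5 * (2.9222:ℝ)) := by have h := cosrec (6 * (2.9222:ℝ)) ((2.9222:ℝ)); rw [show (6 * (2.9222:ℝ)) + (2.9222:ℝ) = 7 * (2.9222:ℝ) by norm_num, show (6 * (2.9222:ℝ)) - (2.9222:ℝ) = 5 * (2.9222:ℝ) by norm_num] at h; linarith only [h]
  have hK7 : ((-35040583171819/1000000000000000:ℝ)) ≤ Real.cos (7 * (2.9222:ℝ)) ∧ Real.cos (7 * (2.9222:ℝ)) ≤ ((-35040570778003/1000000000000000:ℝ)) := by rw [e7]; exact ⟨by linarith only [p7.1, hK5.2], by linarith only [p7.2, hK5.1]⟩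
  have p8 := mul_np hK1.1 hK1.2 (by norm_num) hK7.1 hK7.2 (by norm_num)
  have e8 : Real.cos (8 * (2.9222:ℝ)) = 2 * Real.cos ((2.9222:ℝ)) * Real.cos (7 * (2.9222:ℝ)) - Real.cos (6 * (2.9222:ℝ)) := by have h := cosrec (7 * (2.9222:ℝ)) ((2.9222:ℝ)); rw [show (7 * (2.9222:ℝ)) + (2.9222:ℝ) = 8 * (2.9222:ℝ) by norm_num, show (7 * (2.9222:ℝ)) - (2.9222:ℝ) = 6 * (2.9222:ℝ) by norm_num] at h; linarith only [h]
  have hK8 : ((-183302589175591/1000000000000000:ℝ)) ≤ Real.cos (8 * (2.9222:ℝ)) ∧ Real.cos (8 * (2.9222:ℝ)) ≤ ((-114564099851/625000000000:ℝ)) := by rw [e8]; exact ⟨by linarith only [p8.1, hK6.2], by linarith only [p8.2, hK6.1]⟩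
  have p9 := mul_np hK1.1 hK1.2 (by norm_num) hK8.1 hK8.2 (by norm_num)
  have e9 : Real.cos (9 * (2.9222:ℝ)) = 2 * Real.cos ((2.9222:ℝ)) * Real.cos (8 * (2.9222:ℝ)) - Real.cos (7 * (2.9222:ℝ)) := by have h := cosrec (8 * (2.9222:ℝ)) ((2.9222:ℝ)); rw [show (8 * (2.9222:ℝ)) + (2.9222:ℝ) = 9 * (2.9222:ℝ) by norm_num, show (8 * (2.9222:ℝ)) - (2.9222:ℝ) = 7 * (2.9222:ℝ) by norm_num] at h; linarith only [h]
  have hK9 : ((314286476831/800000000000:ℝ)) ≤ Real.cos (9 * (2.9222:ℝ)) ∧ Real.cos (9 * (2.9222:ℝ)) ≤ ((78571633172669/200000000000000:ℝ)) := by rw [e9]; exact ⟨by linarith only [p9.1, hK7.2], by linarith only [p9.2, hK7.1]⟩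
  have p10 := mul_nn hK1.1 hK1.2 (by norm_num) hK9.1 (by norm_num) hK9.2
  have e10 : Real.cos (10 * (2.9222:ℝ)) = 2 * Real.cos ((2.9222:ℝ)) * Real.cos (9 * (2.9222:ℝ)) - Real.cos (8 * (2.9222:ℝ)) := by have h := cosrec (9 * (2.9222:ℝ)) ((2.9222:ℝ)); rw [show (9 * (2.9222:ℝ)) + (2.9222:ℝ) = 10 * (2.9222:ℝ) by norm_num, show (9 * (2.9222:ℝ)) - (2.9222:ℝ) = 8 * (2.9222:ℝ) by norm_num] at h; linarith only [h]
  have hK10 : ((-116716000493111/200000000000000:ℝ)) ≤ Real.cos (10 * (2.9222:ℝ)) ∧ Real.cos (10 * (2.9222:ℝ)) ≤ ((-583579836722111/1000000000000000:ℝ)) := by rw [e10]; exact ⟨by linarith only [p10.1, hK8.2], by linarith only [p10.2, hK8.1]⟩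
  have p11 := mul_np hK1.1 hK1.2 (by norm_num) hK10.1 hK10.2 (by norm_num)
  have e11 : Real.cos (11 * (2.9222:ℝ)) = 2 * Real.cos ((2.9222:ℝ)) * Real.cos (10 * (2.9222:ℝ)) - Real.cos (9 * (2.9222:ℝ)) := by have h := cosrec (10 * (2.9222:ℝ)) ((2.9222:ℝ)); rw [show (10 * (2.9222:ℝ)) + (2.9222:ℝ) = 11 * (2.9222:ℝ) by norm_num, show (10 * (2.9222:ℝ)) - (2.9222:ℝ) = 9 * (2.9222:ℝ) by norm_num] at h; linarith only [h]
  have hK11 : ((746324468790299/1000000000000000:ℝ)) ≤ Real.cos (11 * (2.9222:ℝ)) ∧ Real.cos (11 * (2.9222:ℝ)) ≤ ((93290607774637/125000000000000:ℝ)) := by rw [e11]; exact ⟨by linarith only [p11.1, hK9.2], by linarith only [p11.2, hK9.1]⟩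
  have p12 := mul_nn hK1.1 hK1.2 (by norm_num) hK11.1 (by norm_num) hK11.2
  have e12 : Real.cos (12 * (2.9222:ℝ)) = 2 * Real.cos ((2.9222:ℝ)) * Real.cos (11 * (2.9222:ℝ)) - Real.cos (10 * (2.9222:ℝ)) := by have h := cosrec (11 * (2.9222:ℝ)) ((2.9222:ℝ)); rw [show (11 * (2.9222:ℝ)) + (2.9222:ℝ) = 12 * (2.9222:ℝ) by norm_num, show (11 * (2.9222:ℝ)) - (2.9222:ℝ) = 10 * (2.9222:ℝ) by norm_num] at h; linarith only [h]
  have hK12 : ((-436645395332571/500000000000000:ℝ)) ≤ Real.cos (12 * (2.9222:ℝ)) ∧ Real.cos (12 * (2.9222:ℝ)) ≤ ((-873289856915591/1000000000000000:ℝ)) := by rw [e12]; exact ⟨by linarith only [p12.1, hK10.2], by linarith only [p12.2, hK10.1]⟩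
  have p13 := mul_np hK1.1 hK1.2 (by norm_num) hK12.1 hK12.2 (by norm_num)
  have e13 : Real.cos (13 * (2.9222:ℝ)) = 2 * Real.cos ((2.9222:ℝ)) * Real.cos (12 * (2.9222:ℝ)) - Real.cos (11 * (2.9222:ℝ)) := by have h := cosrec (12 * (2.9222:ℝ)) ((2.9222:ℝ)); rw [show (12 * (2.9222:ℝ)) + (2.9222:ℝ) = 13 * (2.9222:ℝ) by norm_num, show (12 * (2.9222:ℝ)) - (2.9222:ℝ) = 11 * (2.9222:ℝ) by norm_num] at h; linarith only [h]
  have hK13 : ((479194502277757/500000000000000:ℝ)) ≤ Real.cos (13 * (2.9222:ℝ)) ∧ Real.cos (13 * (2.9222:ℝ)) ≤ ((191678244151727/200000000000000:ℝ)) := by rw [e13]; exact ⟨by linarith only [p13.1, hK11.2], by linarith only [p13.2, hK11.1]⟩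
  have p14 := mul_nn hK1.1 hK1.2 (by norm_num) hK13.1 (by norm_num) hK13.2
  have e14 : Real.cos (14 * (2.9222:ℝ)) = 2 * Real.cos ((2.9222:ℝ)) * Real.cos (13 * (2.9222:ℝ)) - Real.cos (12 * (2.9222:ℝ)) := by have h := cosrec (13 * (2.9222:ℝ)) ((2.9222:ℝ)); rw [show (13 * (2.9222:ℝ)) + (2.9222:ℝ) = 14 * (2.9222:ℝ) by norm_num, show (13 * (2.9222:ℝ)) - (2.9222:ℝ) = 12 * (2.9222:ℝ) by norm_num] at h; linarith only [h]
  have hK14 : ((-997546945919383/1000000000000000:ℝ)) ≤ Real.cos (14 * (2.9222:ℝ)) ∧ Real.cos (14 * (2.9222:ℝ)) ≤ ((-997541685941683/1000000000000000:ℝ)) := by rw [e14]; exact ⟨by linarith only [p14.1, hK12.2], by linarith only [p14.2, hK12.1]⟩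
  have p15 := mul_np hK1.1 hK1.2 (by norm_num) hK14.1 hK14.2 (by norm_num)
  have e15 : Real.cos (15 * (2.9222:ℝ)) = 2 * Real.cos ((2.9222:ℝ)) * Real.cos (14 * (2.9222:ℝ)) - Real.cos (13 * (2.9222:ℝ)) := by have h := cosrec (14 * (2.9222:ℝ)) ((2.9222:ℝ)); rw [show (14 * (2.9222:ℝ)) + (2.9222:ℝ) = 15 * (2.9222:ℝ) by norm_num, show (14 * (2.9222:ℝ)) - (2.9222:ℝ) = 13 * (2.9222:ℝ) by norm_num] at h; linarith only [h]
  have hK15 : ((123608703027477/125000000000000:ℝ)) ≤ Real.cos (15 * (2.9222:ℝ)) ∧ Real.cos (15 * (2.9222:ℝ)) ≤ ((494441054141647/500000000000000:ℝ)) := by rw [e15]; exact ⟨by linarith only [p15.1, hK13.2], by linarith only [p15.2, hK13.1]⟩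
  have p16 := mul_nn hK1.1 hK1.2 (by norm_num) hK15.1 (by norm_num) hK15.2
  have e16 : Real.cos (16 * (2.9222:ℝ)) = 2 * Real.cos ((2.9222:ℝ)) * Real.cos (15 * (2.9222:ℝ)) - Real.cos (14 * (2.9222:ℝ)) := by have h := cosrec (15 * (2.9222:ℝ)) ((2.9222:ℝ)); rw [show (15 * (2.9222:ℝ)) + (2.9222:ℝ) = 16 * (2.9222:ℝ) by norm_num, show (15 * (2.9222:ℝ)) - (2.9222:ℝ) = 14 * (2.9222:ℝ) by norm_num] at h; linarith only [h]
  have hK16 : ((-116601893403521/125000000000000:ℝ)) ≤ Real.cos (16 * (2.9222:ℝ)) ∧ Real.cos (16 * (2.9222:ℝ)) ≤ ((-466392758772289/500000000000000:ℝ)) := by rw [e16]; exact ⟨by linarith only [p16.1, hK14.2], by linarith only [p16.2, hK14.1]⟩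
  have p17 := mul_np hK1.1 hK1.2 (by norm_num) hK16.1 hK16.2 (by norm_num)
  have e17 : Real.cos (17 * (2.9222:ℝ)) = 2 * Real.cos ((2.9222:ℝ)) * Real.cos (16 * (2.9222:ℝ)) - Real.cos (15 * (2.9222:ℝ)) := by have h := cosrec (16 * (2.9222:ℝ)) ((2.9222:ℝ)); rw [show (16 * (2.9222:ℝ)) + (2.9222:ℝ) = 17 * (2.9222:ℝ) by norm_num, show (16 * (2.9222:ℝ)) - (2.9222:ℝ) = 15 * (2.9222:ℝ) by norm_num] at h; linarith only [h]
  have hK17 : ((415985417591637/500000000000000:ℝ)) ≤ Real.cos (17 * (2.9222:ℝ)) ∧ Real.cos (17 * (2.9222:ℝ)) ≤ ((832041158221383/1000000000000000:ℝ)) := by rw [e17]; exact ⟨by linarith only [p17.1, hK15.2], by linarith only [p17.2, hK15.1]⟩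
  have p18 := mul_nn hK1.1 hK1.2 (by norm_num) hK17.1 (by norm_num) hK17.2
  have e18 : Real.cos (18 * (2.9222:ℝ)) = 2 * Real.cos ((2.9222:ℝ)) * Real.cos (17 * (2.9222:ℝ)) - Real.cos (16 * (2.9222:ℝ)) := by have h := cosrec (17 * (2.9222:ℝ)) ((2.9222:ℝ)); rw [show (17 * (2.9222:ℝ)) + (2.9222:ℝ) = 18 * (2.9222:ℝ) by norm_num, show (17 * (2.9222:ℝ)) - (2.9222:ℝ) = 16 * (2.9222:ℝ) by norm_num] at h; linarith only [h]
  have hK18 : ((-172852107535989/250000000000000:ℝ)) ≤ Real.cos (18 * (2.9222:ℝ)) ∧ Real.cos (18 * (2.9222:ℝ)) ≤ ((-345620762819327/500000000000000:ℝ)) := by rw [e18]; exact ⟨by linarith only [p18.1, hK16.2], by linarith only [p18.2, hK16.1]⟩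
  have p19 := mul_np hK1.1 hK1.2 (by norm_num) hK18.1 hK18.2 (by norm_num)
  have e19 : Real.cos (19 * (2.9222:ℝ)) = 2 * Real.cos ((2.9222:ℝ)) * Real.cos (18 * (2.9222:ℝ)) - Real.cos (17 * (2.9222:ℝ)) := by have h := cosrec (18 * (2.9222:ℝ)) ((2.9222:ℝ)); rw [show (18 * (2.9222:ℝ)) + (2.9222:ℝ) = 19 * (2.9222:ℝ) by norm_num, show (18 * (2.9222:ℝ)) - (2.9222:ℝ) = 17 * (2.9222:ℝ) by norm_num] at h; linarith only [h]
  have hK19 : ((25865175602519/50000000000000:ℝ)) ≤ Real.cos (19 * (2.9222:ℝ)) ∧ Real.cos (19 * (2.9222:ℝ)) ≤ ((258849821341249/500000000000000:ℝ)) := by rw [e19]; exact ⟨by linarith only [p19.1, hK17.2], by linarith only [p19.2, hK17.1]⟩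
  have p20 := mul_nn hK1.1 hK1.2 (by norm_num) hK19.1 (by norm_num) hK19.2
  have e20 : Real.cos (20 * (2.9222:ℝ)) = 2 * Real.cos ((2.9222:ℝ)) * Real.cos (19 * (2.9222:ℝ)) - Real.cos (18 * (2.9222:ℝ)) := by have h := cosrec (19 * (2.9222:ℝ)) ((2.9222:ℝ)); rw [show (19 * (2.9222:ℝ)) + (2.9222:ℝ) = 20 * (2.9222:ℝ) by norm_num, show (19 * (2.9222:ℝ)) - (2.9222:ℝ) = 18 * (2.9222:ℝ) by norm_num] at h; linarith only [h]
  have hK20 : ((-15966952123517/50000000000000:ℝ)) ≤ Real.cos (20 * (2.9222:ℝ)) ∧ Real.cos (20 * (2.9222:ℝ)) ≤ ((-318398867317127/1000000000000000:ℝ)) := by rw [e20]; exact ⟨by linarith only [p20.1, hK18.2], by linarith only [p20.2, hK18.1]⟩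
  have p21 := mul_np hK1.1 hK1.2 (by norm_num) hK20.1 hK20.2 (by norm_num)
  have e21 : Real.cos (21 * (2.9222:ℝ)) = 2 * Real.cos ((2.9222:ℝ)) * Real.cos (20 * (2.9222:ℝ)) - Real.cos (19 * (2.9222:ℝ)) := by have h := cosrec (20 * (2.9222:ℝ)) ((2.9222:ℝ)); rw [show (20 * (2.9222:ℝ)) + (2.9222:ℝ) = 21 * (2.9222:ℝ) by norm_num, show (20 * (2.9222:ℝ)) - (2.9222:ℝ) = 19 * (2.9222:ℝ) by norm_num] at h; linarith only [h]
  have hK21 : ((25958482361929/250000000000000:ℝ)) ≤ Real.cos (21 * (2.9222:ℝ)) ∧ Real.cos (21 * (2.9222:ℝ)) ≤ ((132581672569/1250000000000:ℝ)) := by rw [e21]; exact ⟨by linarith only [p21.1, hK19.2], by linarith only [p21.2, hK19.1]⟩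
  have qs := sin_ival (m := (14611/400000:ℝ)) (E := (92721099/1000000000000000:ℝ)) (by norm_num : ((14611/400000:ℝ)) ≤ ((2.9222:ℝ) / 10)/8) (by norm_num : ((2.9222:ℝ) / 10)/8 ≤ ((14611/400000:ℝ))) (by norm_num) (by norm_num) (by norm_num) (by norm_num)
  have qsl : ((1460771377033/40000000000000:ℝ)) ≤ Real.sin (((2.9222:ℝ) / 10)/8) := by linarith only [qs.1, (by norm_num : ((1460771377033/40000000000000:ℝ)) ≤ ((14611/400000:ℝ)) - ((14611/400000:ℝ))^3/6 - ((92721099/1000000000000000:ℝ)))]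
  have qsu : Real.sin (((2.9222:ℝ) / 10)/8) ≤ ((4564933733503/125000000000000:ℝ)) := by linarith only [qs.2, (by norm_num : ((14611/400000:ℝ)) - ((14611/400000:ℝ))^3/6 + ((92721099/1000000000000000:ℝ)) ≤ ((4564933733503/125000000000000:ℝ)))]
  have qc4 := cos_from_sin (show ((2.9222:ℝ) / 10)/4 = 2*(((2.9222:ℝ) / 10)/8) by ring) qsl qsu (by norm_num) (by norm_num) (Or.inl ⟨by norm_num, by norm_num⟩) (show ((249333164160279/250000000000000:ℝ)) ≤ 1-2*((666835839721/500000000000000:ℝ)) by norm_num) (show 1-2*((666829067487/500000000000000:ℝ)) ≤ ((249333170932513/250000000000000:ℝ)) by norm_num)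
  have qc2 := cos_dbl (show ((2.9222:ℝ) / 10)/2 = 2*(((2.9222:ℝ) / 10)/4) by ring) qc4.1 qc4.2 (by norm_num) (by norm_num) (Or.inl ⟨by norm_num, by norm_num⟩) (show ((247336214001413/250000000000000:ℝ)) ≤ 2*((497336214001413/500000000000000:ℝ))-1 by norm_num) (show 2*((248668120509047/250000000000000:ℝ))-1 ≤ ((123668120509047/125000000000000:ℝ)) by norm_num)
  have qc1 := cos_dbl (show ((2.9222:ℝ) / 10) = 2*(((2.9222:ℝ) / 10)/2) by ring) qc2.1 qc2.2 (by norm_num) (by norm_num) (Or.inl ⟨by norm_num, by norm_num⟩) (show ((119700811026211/125000000000000:ℝ)) ≤ 2*((244700811026211/250000000000000:ℝ))-1 by norm_num) (show 2*((978803457935371/1000000000000000:ℝ))-1 ≤ ((478803457935371/500000000000000:ℝ)) by norm_num)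
  rw [dExpand]
  linarith only [hK1.1, hK1.2, hK2.1, hK2.2, hK3.1, hK3.2, hK4.1, hK4.2, hK5.1, hK5.2, hK6.1, hK6.2, hK7.1, hK7.2, hK8.1, hK8.2, hK9.1, hK9.2, hK10.1, hK10.2, hK11.1, hK11.2, hK12.1, hK12.2, hK13.1, hK13.2, hK14.1, hK14.2, hK15.1, hK15.2, hK16.1, hK16.2, hK17.1, hK17.2, hK18.1, hK18.2, hK19.1, hK19.2, hK20.1, hK20.2, hK21.1, hK21.2, qc1.1]



set_option maxHeartbeats 1000000 in

private lemma pt4 : Δ ((2.9403:ℝ)) > ((1112452981929141/1000000000000000:ℝ)) := by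
  have hpl := Real.pi_gt_d20
  have hpu := Real.pi_lt_d20
  obtain ⟨r, hr⟩ : ∃ y:ℝ, (2.9403:ℝ) - π = y := ⟨_, rfl⟩
  have hRl : ((-100646326794897/500000000000000:ℝ)) ≤ r := by rw [← hr]; linarith only [hpu]
  have hRu : r ≤ ((-201292653589793/1000000000000000:ℝ)) := by rw [← hr]; linarith only [hpl]
  have es := sin_ival (m := (1572598856171/1000000000000000:ℝ)) (E := (319/1000000000000000:ℝ)) (by linarith only [hRl] : ((-1572598856171/1000000000000000:ℝ)) ≤ (r)/128) (by linarith only [hRu] : (r)/128 ≤ ((-157259885617/100000000000000:ℝ))) (by norm_num) (by norm_num) (by norm_num) (by norm_num)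
  have esl : ((-15725982083/10000000000000:ℝ)) ≤ Real.sin ((r)/128) := by linarith only [es.1, (by norm_num : ((-15725982083/10000000000000:ℝ)) ≤ ((-1572598856171/1000000000000000:ℝ)) - ((-157259885617/100000000000000:ℝ))^3/6 - ((319/1000000000000000:ℝ)))]
  have esu : Real.sin ((r)/128) ≤ ((-78629910383/50000000000000:ℝ)) := by linarith only [es.2, (by norm_num : ((-157259885617/100000000000000:ℝ)) - ((-1572598856171/1000000000000000:ℝ))^3/6 + ((319/1000000000000000:ℝ)) ≤ ((-78629910383/50000000000000:ℝ)))]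
  have ec64 := cos_from_sin (show (r)/64 = 2*((r)/128) by ring) esl esu (by norm_num) (by norm_num) (Or.inr (Or.inl ⟨by norm_num, by norm_num⟩)) (show ((3999980215479/4000000000000:ℝ)) ≤ 1-2*((19784521/8000000000000:ℝ)) by norm_num) (show 1-2*((1236532561/500000000000000:ℝ)) ≤ ((249998763467439/250000000000000:ℝ)) by norm_num)
  have ec32 := cos_dbl (show (r)/32 = 2*((r)/64) by ring) ec64.1 ec64.2 (by norm_num) (by norm_num) (Or.inl ⟨by norm_num, by norm_num⟩) (show ((124997526940991/125000000000000:ℝ)) ≤ 2*((249997526940991/250000000000000:ℝ))-1 by norm_num) (show 2*((999990107763977/1000000000000000:ℝ))-1 ≤ ((499990107763977/500000000000000:ℝ)) by norm_num)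
  have ec16 := cos_dbl (show (r)/16 = 2*((r)/32) by ring) ec32.1 ec32.2 (by norm_num) (by norm_num) (Or.inl ⟨by norm_num, by norm_num⟩) (show ((499960431447281/500000000000000:ℝ)) ≤ 2*((999960431447281/1000000000000000:ℝ))-1 by norm_num) (show 2*((499980215723667/500000000000000:ℝ))-1 ≤ ((249980215723667/250000000000000:ℝ)) by norm_num)
  have ec8 := cos_dbl (show (r)/8 = 2*((r)/16) by ring) ec16.1 ec16.2 (by norm_num) (by norm_num) (Or.inl ⟨by norm_num, by norm_num⟩) (show ((99968346410361/100000000000000:ℝ)) ≤ 2*((199968346410361/200000000000000:ℝ))-1 by norm_num) (show 2*((499920866026009/500000000000000:ℝ))-1 ≤ ((249920866026009/250000000000000:ℝ)) by norm_num)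
  have ec4 := cos_dbl (show (r)/4 = 2*((r)/8) by ring) ec8.1 ec8.2 (by norm_num) (by norm_num) (Or.inl ⟨by norm_num, by norm_num⟩) (show ((499367028402193/500000000000000:ℝ)) ≤ 2*((999367028402193/1000000000000000:ℝ))-1 by norm_num) (show 2*((499683514201523/500000000000000:ℝ))-1 ≤ ((249683514201523/250000000000000:ℝ)) by norm_num)
  have ec2 := cos_dbl (show (r)/2 = 2*((r)/4) by ring) ec4.1 ec4.2 (by norm_num) (by norm_num) (Or.inl ⟨by norm_num, by norm_num⟩) (show ((248734858110473/250000000000000:ℝ)) ≤ 2*((498734858110473/500000000000000:ℝ))-1 by norm_num) (show 2*((199493943244871/200000000000000:ℝ))-1 ≤ ((99493943244871/100000000000000:ℝ)) by norm_num)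
  have ec1 := cos_dbl (show (r) = 2*((r)/2) by ring) ec2.1 ec2.2 (by norm_num) (by norm_num) (Or.inl ⟨by norm_num, by norm_num⟩) (show ((244952237113897/250000000000000:ℝ)) ≤ 2*((494952237113897/500000000000000:ℝ))-1 by norm_num) (show 2*((494952237120681/500000000000000:ℝ))-1 ≤ ((244952237120681/250000000000000:ℝ)) by norm_num)
  have hid : Real.cos ((2.9403:ℝ)) = -Real.cos r := by rw [show ((2.9403:ℝ):ℝ) = r + π by rw [← hr]; ring, Real.cos_add_pi]
  have hK1 : ((-244952237120681/250000000000000:ℝ)) ≤ Real.cos ((2.9403:ℝ)) ∧ Real.cos ((2.9403:ℝ)) ≤ ((-244952237113897/250000000000000:ℝ)) := by rw [hid]; exact ⟨by linarith only [ec1.2], by linarith only [ec1.1]⟩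
  have s2 := sq_ival (m := (192005115094729/200000000000000:ℝ)) (M := (480012787763411/500000000000000:ℝ)) hK1.1 hK1.2 (by norm_num) (by norm_num) (Or.inr (Or.inl ⟨by norm_num, by norm_num⟩))
  have e2 : Real.cos (2 * (2.9403:ℝ)) = 2 * Real.cos ((2.9403:ℝ)) ^ 2 - 1 := by have h := Real.cos_two_mul ((2.9403:ℝ)); rw [show 2 * ((2.9403:ℝ):ℝ) = 2 * (2.9403:ℝ) by norm_num] at h; exact h
  have hK2 : ((92005115094729/100000000000000:ℝ)) ≤ Real.cos (2 * (2.9403:ℝ)) ∧ Real.cos (2 * (2.9403:ℝ)) ≤ ((230012787763411/250000000000000:ℝ)) := by rw [e2]; exact ⟨by linarith only [s2.1], by linarith only [s2.2]⟩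
  have p3 := mul_nn hK1.1 hK1.2 (by norm_num) hK2.1 (by norm_num) hK2.2
  have e3 : Real.cos (3 * (2.9403:ℝ)) = 2 * Real.cos ((2.9403:ℝ)) * Real.cos (2 * (2.9403:ℝ)) - Real.cos ((2.9403:ℝ)) := by have h := cosrec (2 * (2.9403:ℝ)) ((2.9403:ℝ)); rw [show (2 * (2.9403:ℝ)) + (2.9403:ℝ) = 3 * (2.9403:ℝ) by norm_num, show (2 * (2.9403:ℝ)) - (2.9403:ℝ) = (2.9403:ℝ) by norm_num] at h; linarith only [h]
  have hK3 : ((-411569876636397/500000000000000:ℝ)) ≤ Real.cos (3 * (2.9403:ℝ)) ∧ Real.cos (3 * (2.9403:ℝ)) ≤ ((-823139752987311/1000000000000000:ℝ)) := by rw [e3]; exact ⟨by linarith only [p3.1, hK1.2], by linarith only [p3.2, hK1.1]⟩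
  have p4 := mul_np hK1.1 hK1.2 (by norm_num) hK3.1 hK3.2 (by norm_num)
  have e4 : Real.cos (4 * (2.9403:ℝ)) = 2 * Real.cos ((2.9403:ℝ)) * Real.cos (3 * (2.9403:ℝ)) - Real.cos (2 * (2.9403:ℝ)) := by have h := cosrec (3 * (2.9403:ℝ)) ((2.9403:ℝ)); rw [show (3 * (2.9403:ℝ)) + (2.9403:ℝ) = 4 * (2.9403:ℝ) by norm_num, show (3 * (2.9403:ℝ)) - (2.9403:ℝ) = 2 * (2.9403:ℝ) by norm_num] at h; linarith only [h]
  have hK4 : ((138597648111867/200000000000000:ℝ)) ≤ Real.cos (4 * (2.9403:ℝ)) ∧ Real.cos (4 * (2.9403:ℝ)) ≤ ((692988241269801/1000000000000000:ℝ)) := by rw [e4]; exact ⟨by linarith only [p4.1, hK2.2], by linarith only [p4.2, hK2.1]⟩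
  have p5 := mul_nn hK1.1 hK1.2 (by norm_num) hK4.1 (by norm_num) hK4.2
  have e5 : Real.cos (5 * (2.9403:ℝ)) = 2 * Real.cos ((2.9403:ℝ)) * Real.cos (4 * (2.9403:ℝ)) - Real.cos (3 * (2.9403:ℝ)) := by have h := cosrec (4 * (2.9403:ℝ)) ((2.9403:ℝ)); rw [show (4 * (2.9403:ℝ)) + (2.9403:ℝ) = 5 * (2.9403:ℝ) by norm_num, show (4 * (2.9403:ℝ)) - (2.9403:ℝ) = 3 * (2.9403:ℝ) by norm_num] at h; linarith only [h]
  have hK5 : ((-534852406991601/1000000000000000:ℝ)) ≤ Real.cos (5 * (2.9403:ℝ)) ∧ Real.cos (5 * (2.9403:ℝ)) ≤ ((-267426202638133/500000000000000:ℝ)) := by rw [e5]; exact ⟨by linarith only [p5.1, hK3.2], by linarith only [p5.2, hK3.1]⟩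
  have p6 := mul_np hK1.1 hK1.2 (by norm_num) hK5.1 hK5.2 (by norm_num)
  have e6 : Real.cos (6 * (2.9403:ℝ)) = 2 * Real.cos ((2.9403:ℝ)) * Real.cos (5 * (2.9403:ℝ)) - Real.cos (4 * (2.9403:ℝ)) := by have h := cosrec (5 * (2.9403:ℝ)) ((2.9403:ℝ)); rw [show (5 * (2.9403:ℝ)) + (2.9403:ℝ) = 6 * (2.9403:ℝ) by norm_num, show (5 * (2.9403:ℝ)) - (2.9403:ℝ) = 4 * (2.9403:ℝ) by norm_num] at h; linarith only [h]
  have hK6 : ((355118104315559/1000000000000000:ℝ)) ≤ Real.cos (6 * (2.9403:ℝ)) ∧ Real.cos (6 * (2.9403:ℝ)) ≤ ((71023621683291/200000000000000:ℝ)) := by rw [e6]; exact ⟨by linarith only [p6.1, hK4.2], by linarith only [p6.2, hK4.1]⟩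
  have p7 := mul_nn hK1.1 hK1.2 (by norm_num) hK6.1 (by norm_num) hK6.2
  have e7 : Real.cos (7 * (2.9403:ℝ)) = 2 * Real.cos ((2.9403:ℝ)) * Real.cos (6 * (2.9403:ℝ)) - Real.cos (5 * (2.9403:ℝ)) := by have h := cosrec (6 * (2.9403:ℝ)) ((2.9403:ℝ)); rw [show (6 * (2.9403:ℝ)) + (2.9403:ℝ) = 7 * (2.9403:ℝ) by norm_num, show (6 * (2.9403:ℝ)) - (2.9403:ℝ) = 5 * (2.9403:ℝ) by norm_num] at h; linarith only [h]
  have hK7 : ((-10065212219571/62500000000000:ℝ)) ≤ Real.cos (7 * (2.9403:ℝ)) ∧ Real.cos (7 * (2.9403:ℝ)) ≤ ((-80521692871169/500000000000000:ℝ)) := by rw [e7]; exact ⟨by linarith only [p7.1, hK5.2], by linarith only [p7.2, hK5.1]⟩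
  have p8 := mul_np hK1.1 hK1.2 (by norm_num) hK7.1 hK7.2 (by norm_num)
  have e8 : Real.cos (8 * (2.9403:ℝ)) = 2 * Real.cos ((2.9403:ℝ)) * Real.cos (7 * (2.9403:ℝ)) - Real.cos (6 * (2.9403:ℝ)) := by have h := cosrec (7 * (2.9403:ℝ)) ((2.9403:ℝ)); rw [show (7 * (2.9403:ℝ)) + (2.9403:ℝ) = 8 * (2.9403:ℝ) by norm_num, show (7 * (2.9403:ℝ)) - (2.9403:ℝ) = 6 * (2.9403:ℝ) by norm_num] at h; linarith only [h]
  have hK8 : ((-197673037683/5000000000000:ℝ)) ≤ Real.cos (8 * (2.9403:ℝ)) ∧ Real.cos (8 * (2.9403:ℝ)) ≤ ((-9883646069983/250000000000000:ℝ)) := by rw [e8]; exact ⟨by linarith only [p8.1, hK6.2], by linarith only [p8.2, hK6.1]⟩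
  have p9 := mul_np hK1.1 hK1.2 (by norm_num) hK8.1 hK8.2 (by norm_num)
  have e9 : Real.cos (9 * (2.9403:ℝ)) = 2 * Real.cos ((2.9403:ℝ)) * Real.cos (8 * (2.9403:ℝ)) - Real.cos (7 * (2.9403:ℝ)) := by have h := cosrec (8 * (2.9403:ℝ)) ((2.9403:ℝ)); rw [show (8 * (2.9403:ℝ)) + (2.9403:ℝ) = 9 * (2.9403:ℝ) by norm_num, show (8 * (2.9403:ℝ)) - (2.9403:ℝ) = 7 * (2.9403:ℝ) by norm_num] at h; linarith only [h]
  have hK9 : ((47703212928847/200000000000000:ℝ)) ≤ Real.cos (9 * (2.9403:ℝ)) ∧ Real.cos (9 * (2.9403:ℝ)) ≤ ((238516119991363/1000000000000000:ℝ)) := by rw [e9]; exact ⟨by linarith only [p9.1, hK7.2], by linarith only [p9.2, hK7.1]⟩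
  have p10 := mul_nn hK1.1 hK1.2 (by norm_num) hK9.1 (by norm_num) hK9.2
  have e10 : Real.cos (10 * (2.9403:ℝ)) = 2 * Real.cos ((2.9403:ℝ)) * Real.cos (9 * (2.9403:ℝ)) - Real.cos (8 * (2.9403:ℝ)) := by have h := cosrec (9 * (2.9403:ℝ)) ((2.9403:ℝ)); rw [show (9 * (2.9403:ℝ)) + (2.9403:ℝ) = 10 * (2.9403:ℝ) by norm_num, show (9 * (2.9403:ℝ)) - (2.9403:ℝ) = 8 * (2.9403:ℝ) by norm_num] at h; linarith only [h]
  have hK10 : ((-213932936584951/500000000000000:ℝ)) ≤ Real.cos (10 * (2.9403:ℝ)) ∧ Real.cos (10 * (2.9403:ℝ)) ≤ ((-85573148288213/200000000000000:ℝ)) := by rw [e10]; exact ⟨by linarith only [p10.1, hK8.2], by linarith only [p10.2, hK8.1]⟩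
  have p11 := mul_np hK1.1 hK1.2 (by norm_num) hK10.1 hK10.2 (by norm_num)
  have e11 : Real.cos (11 * (2.9403:ℝ)) = 2 * Real.cos ((2.9403:ℝ)) * Real.cos (10 * (2.9403:ℝ)) - Real.cos (9 * (2.9403:ℝ)) := by have h := cosrec (10 * (2.9403:ℝ)) ((2.9403:ℝ)); rw [show (10 * (2.9403:ℝ)) + (2.9403:ℝ) = 11 * (2.9403:ℝ) by norm_num, show (10 * (2.9403:ℝ)) - (2.9403:ℝ) = 9 * (2.9403:ℝ) by norm_num] at h; linarith only [h]
  have hK11 : ((599937244411717/1000000000000000:ℝ)) ≤ Real.cos (11 * (2.9403:ℝ)) ∧ Real.cos (11 * (2.9403:ℝ)) ≤ ((299968778960127/500000000000000:ℝ)) := by rw [e11]; exact ⟨by linarith only [p11.1, hK9.2], by linarith only [p11.2, hK9.1]⟩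
  have p12 := mul_nn hK1.1 hK1.2 (by norm_num) hK11.1 (by norm_num) hK11.2
  have e12 : Real.cos (12 * (2.9403:ℝ)) = 2 * Real.cos ((2.9403:ℝ)) * Real.cos (11 * (2.9403:ℝ)) - Real.cos (10 * (2.9403:ℝ)) := by have h := cosrec (11 * (2.9403:ℝ)) ((2.9403:ℝ)); rw [show (11 * (2.9403:ℝ)) + (2.9403:ℝ) = 12 * (2.9403:ℝ) by norm_num, show (11 * (2.9403:ℝ)) - (2.9403:ℝ) = 10 * (2.9403:ℝ) by norm_num] at h; linarith only [h]
  have hK12 : ((-74778263412121/100000000000000:ℝ)) ≤ Real.cos (12 * (2.9403:ℝ)) ∧ Real.cos (12 * (2.9403:ℝ)) ≤ ((-747781888002873/1000000000000000:ℝ)) := by rw [e12]; exact ⟨by linarith only [p12.1, hK10.2], by linarith only [p12.2, hK10.1]⟩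
  have p13 := mul_np hK1.1 hK1.2 (by norm_num) hK12.1 hK12.2 (by norm_num)
  have e13 : Real.cos (13 * (2.9403:ℝ)) = 2 * Real.cos ((2.9403:ℝ)) * Real.cos (12 * (2.9403:ℝ)) - Real.cos (11 * (2.9403:ℝ)) := by have h := cosrec (12 * (2.9403:ℝ)) ((2.9403:ℝ)); rw [show (12 * (2.9403:ℝ)) + (2.9403:ℝ) = 13 * (2.9403:ℝ) by norm_num, show (12 * (2.9403:ℝ)) - (2.9403:ℝ) = 11 * (2.9403:ℝ) by norm_num] at h; linarith only [h]
  have hK13 : ((216357303199051/250000000000000:ℝ)) ≤ Real.cos (13 * (2.9403:ℝ)) ∧ Real.cos (13 * (2.9403:ℝ)) ≤ ((216357747113043/250000000000000:ℝ)) := by rw [e13]; exact ⟨by linarith only [p13.1, hK11.2], by linarith only [p13.2, hK11.1]⟩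
  have p14 := mul_nn hK1.1 hK1.2 (by norm_num) hK13.1 (by norm_num) hK13.2
  have e14 : Real.cos (14 * (2.9403:ℝ)) = 2 * Real.cos ((2.9403:ℝ)) * Real.cos (13 * (2.9403:ℝ)) - Real.cos (12 * (2.9403:ℝ)) := by have h := cosrec (13 * (2.9403:ℝ)) ((2.9403:ℝ)); rw [show (13 * (2.9403:ℝ)) + (2.9403:ℝ) = 14 * (2.9403:ℝ) by norm_num, show (13 * (2.9403:ℝ)) - (2.9403:ℝ) = 12 * (2.9403:ℝ) by norm_num] at h; linarith only [h]
  have hK14 : ((-474066082778251/500000000000000:ℝ)) ≤ Real.cos (14 * (2.9403:ℝ)) ∧ Real.cos (14 * (2.9403:ℝ)) ≤ ((-948127939783981/1000000000000000:ℝ)) := by rw [e14]; exact ⟨by linarith only [p14.1, hK12.2], by linarith only [p14.2, hK12.1]⟩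
  have p15 := mul_np hK1.1 hK1.2 (by norm_num) hK14.1 hK14.2 (by norm_num)
  have e15 : Real.cos (15 * (2.9403:ℝ)) = 2 * Real.cos ((2.9403:ℝ)) * Real.cos (14 * (2.9403:ℝ)) - Real.cos (13 * (2.9403:ℝ)) := by have h := cosrec (14 * (2.9403:ℝ)) ((2.9403:ℝ)); rw [show (14 * (2.9403:ℝ)) + (2.9403:ℝ) = 15 * (2.9403:ℝ) by norm_num, show (14 * (2.9403:ℝ)) - (2.9403:ℝ) = 13 * (2.9403:ℝ) by norm_num] at h; linarith only [h]
  have hK15 : ((496268745455019/500000000000000:ℝ)) ≤ Real.cos (15 * (2.9403:ℝ)) ∧ Real.cos (15 * (2.9403:ℝ)) ≤ ((39701901900677/40000000000000:ℝ)) := by rw [e15]; exact ⟨by linarith only [p15.1, hK13.2], by linarith only [p15.2, hK13.1]⟩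
  have p16 := mul_nn hK1.1 hK1.2 (by norm_num) hK15.1 (by norm_num) hK15.2
  have e16 : Real.cos (16 * (2.9403:ℝ)) = 2 * Real.cos ((2.9403:ℝ)) * Real.cos (15 * (2.9403:ℝ)) - Real.cos (14 * (2.9403:ℝ)) := by have h := cosrec (15 * (2.9403:ℝ)) ((2.9403:ℝ)); rw [show (15 * (2.9403:ℝ)) + (2.9403:ℝ) = 16 * (2.9403:ℝ) by norm_num, show (15 * (2.9403:ℝ)) - (2.9403:ℝ) = 14 * (2.9403:ℝ) by norm_num] at h; linarith only [h]
  have hK16 : ((-996885997919349/1000000000000000:ℝ)) ≤ Real.cos (16 * (2.9403:ℝ)) ∧ Real.cos (16 * (2.9403:ℝ)) ≤ ((-498431032493061/500000000000000:ℝ)) := by rw [e16]; exact ⟨by linarith only [p16.1, hK14.2], by linarith only [p16.2, hK14.1]⟩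
  have p17 := mul_np hK1.1 hK1.2 (by norm_num) hK16.1 hK16.2 (by norm_num)
  have e17 : Real.cos (17 * (2.9403:ℝ)) = 2 * Real.cos ((2.9403:ℝ)) * Real.cos (16 * (2.9403:ℝ)) - Real.cos (15 * (2.9403:ℝ)) := by have h := cosrec (16 * (2.9403:ℝ)) ((2.9403:ℝ)); rw [show (16 * (2.9403:ℝ)) + (2.9403:ℝ) = 17 * (2.9403:ℝ) by norm_num, show (16 * (2.9403:ℝ)) - (2.9403:ℝ) = 15 * (2.9403:ℝ) by norm_num] at h; linarith only [h]
  have hK17 : ((960921195781711/1000000000000000:ℝ)) ≤ Real.cos (17 * (2.9403:ℝ)) ∧ Real.cos (17 * (2.9403:ℝ)) ≤ ((960978151846979/1000000000000000:ℝ)) := by rw [e17]; exact ⟨by linarith only [p17.1, hK15.2], by linarith only [p17.2, hK15.1]⟩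
  have p18 := mul_nn hK1.1 hK1.2 (by norm_num) hK17.1 (by norm_num) hK17.2
  have e18 : Real.cos (18 * (2.9403:ℝ)) = 2 * Real.cos ((2.9403:ℝ)) * Real.cos (17 * (2.9403:ℝ)) - Real.cos (16 * (2.9403:ℝ)) := by have h := cosrec (17 * (2.9403:ℝ)) ((2.9403:ℝ)); rw [show (17 * (2.9403:ℝ)) + (2.9403:ℝ) = 18 * (2.9403:ℝ) by norm_num, show (17 * (2.9403:ℝ)) - (2.9403:ℝ) = 16 * (2.9403:ℝ) by norm_num] at h; linarith only [h]
  have hK18 : ((-443143959982999/500000000000000:ℝ)) ≤ Real.cos (18 * (2.9403:ℝ)) ∧ Real.cos (18 * (2.9403:ℝ)) ≤ ((-886152374855779/1000000000000000:ℝ)) := by rw [e18]; exact ⟨by linarith only [p18.1, hK16.2], by linarith only [p18.2, hK16.1]⟩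
  have p19 := mul_np hK1.1 hK1.2 (by norm_num) hK18.1 hK18.2 (by norm_num)
  have e19 : Real.cos (19 * (2.9403:ℝ)) = 2 * Real.cos ((2.9403:ℝ)) * Real.cos (18 * (2.9403:ℝ)) - Real.cos (17 * (2.9403:ℝ)) := by have h := cosrec (18 * (2.9403:ℝ)) ((2.9403:ℝ)); rw [show (18 * (2.9403:ℝ)) + (2.9403:ℝ) = 19 * (2.9403:ℝ) by norm_num, show (18 * (2.9403:ℝ)) - (2.9403:ℝ) = 17 * (2.9403:ℝ) by norm_num] at h; linarith only [h]
  have hK19 : ((387770950655373/500000000000000:ℝ)) ≤ Real.cos (19 * (2.9403:ℝ)) ∧ Real.cos (19 * (2.9403:ℝ)) ≤ ((38793223702397/50000000000000:ℝ)) := by rw [e19]; exact ⟨by linarith only [p19.1, hK17.2], by linarith only [p19.2, hK17.1]⟩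
  have p20 := mul_nn hK1.1 hK1.2 (by norm_num) hK19.1 (by norm_num) hK19.2
  have e20 : Real.cos (20 * (2.9403:ℝ)) = 2 * Real.cos ((2.9403:ℝ)) * Real.cos (19 * (2.9403:ℝ)) - Real.cos (18 * (2.9403:ℝ)) := by have h := cosrec (19 * (2.9403:ℝ)) ((2.9403:ℝ)); rw [show (19 * (2.9403:ℝ)) + (2.9403:ℝ) = 20 * (2.9403:ℝ) by norm_num, show (19 * (2.9403:ℝ)) - (2.9403:ℝ) = 18 * (2.9403:ℝ) by norm_num] at h; linarith only [h]
  have hK20 : ((-634245534108249/1000000000000000:ℝ)) ≤ Real.cos (20 * (2.9403:ℝ)) ∧ Real.cos (20 * (2.9403:ℝ)) ≤ ((-31673893482353/50000000000000:ℝ)) := by rw [e20]; exact ⟨by linarith only [p20.1, hK18.2], by linarith only [p20.2, hK18.1]⟩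
  have p21 := mul_np hK1.1 hK1.2 (by norm_num) hK20.1 hK20.2 (by norm_num)
  have e21 : Real.cos (21 * (2.9403:ℝ)) = 2 * Real.cos ((2.9403:ℝ)) * Real.cos (20 * (2.9403:ℝ)) - Real.cos (19 * (2.9403:ℝ)) := by have h := cosrec (20 * (2.9403:ℝ)) ((2.9403:ℝ)); rw [show (20 * (2.9403:ℝ)) + (2.9403:ℝ) = 21 * (2.9403:ℝ) by norm_num, show (20 * (2.9403:ℝ)) - (2.9403:ℝ) = 19 * (2.9403:ℝ) by norm_num] at h; linarith only [h]
  have hK21 : ((465510096609603/1000000000000000:ℝ)) ≤ Real.cos (21 * (2.9403:ℝ)) ∧ Real.cos (21 * (2.9403:ℝ)) ≤ ((467336998398189/1000000000000000:ℝ)) := by rw [e21]; exact ⟨by linarith only [p21.1, hK19.2], by linarith only [p21.2, hK19.1]⟩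
  have qs := sin_ival (m := (29403/800000:ℝ)) (E := (3801591/40000000000000:ℝ)) (by norm_num : ((29403/800000:ℝ)) ≤ ((2.9403:ℝ) / 10)/8) (by norm_num : ((2.9403:ℝ) / 10)/8 ≤ ((29403/800000:ℝ))) (by norm_num) (by norm_num) (by norm_num) (by norm_num)
  have qsl : ((36745380232349/1000000000000000:ℝ)) ≤ Real.sin (((2.9403:ℝ) / 10)/8) := by linarith only [qs.1, (by norm_num : ((36745380232349/1000000000000000:ℝ)) ≤ ((29403/800000:ℝ)) - ((29403/800000:ℝ))^3/6 - ((3801591/40000000000000:ℝ)))]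
  have qsu : Real.sin (((2.9403:ℝ) / 10)/8) ≤ ((367455703119/10000000000000:ℝ)) := by linarith only [qs.2, (by norm_num : ((29403/800000:ℝ)) - ((29403/800000:ℝ))^3/6 + ((3801591/40000000000000:ℝ)) ≤ ((367455703119/10000000000000:ℝ)))]
  have qc4 := cos_from_sin (show ((2.9403:ℝ) / 10)/4 = 2*(((2.9403:ℝ) / 10)/8) by ring) qsl qsu (by norm_num) (by norm_num) (Or.inl ⟨by norm_num, by norm_num⟩) (show ((498649763062453/500000000000000:ℝ)) ≤ 1-2*((1350236937547/1000000000000000:ℝ)) by norm_num) (show 1-2*((1350222968419/1000000000000000:ℝ)) ≤ ((498649777031581/500000000000000:ℝ)) by norm_num)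
  have qc2 := cos_dbl (show ((2.9403:ℝ) / 10)/2 = 2*(((2.9403:ℝ) / 10)/4) by ring) qc4.1 qc4.2 (by norm_num) (by norm_num) (Or.inl ⟨by norm_num, by norm_num⟩) (show ((247303172404481/250000000000000:ℝ)) ≤ 2*((497303172404481/500000000000000:ℝ))-1 by norm_num) (show 2*((497303200267291/500000000000000:ℝ))-1 ≤ ((247303200267291/250000000000000:ℝ)) by norm_num)
  have qc1 := cos_dbl (show ((2.9403:ℝ) / 10) = 2*(((2.9403:ℝ) / 10)/2) by ring) qc2.1 qc2.2 (by norm_num) (by norm_num) (Or.inl ⟨by norm_num, by norm_num⟩) (show ((478541745301127/500000000000000:ℝ)) ≤ 2*((978541745301127/1000000000000000:ℝ))-1 by norm_num) (show 2*((489270982899551/500000000000000:ℝ))-1 ≤ ((239270982899551/250000000000000:ℝ)) by norm_num)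
  rw [dExpand]
  linarith only [hK1.1, hK1.2, hK2.1, hK2.2, hK3.1, hK3.2, hK4.1, hK4.2, hK5.1, hK5.2, hK6.1, hK6.2, hK7.1, hK7.2, hK8.1, hK8.2, hK9.1, hK9.2, hK10.1, hK10.2, hK11.1, hK11.2, hK12.1, hK12.2, hK13.1, hK13.2, hK14.1, hK14.2, hK15.1, hK15.2, hK16.1, hK16.2, hK17.1, hK17.2, hK18.1, hK18.2, hK19.1, hK19.2, hK20.1, hK20.2, hK21.1, hK21.2, qc1.1]



set_option maxHeartbeats 1000000 in

private lemma pt5 : Δ ((2.97:ℝ)) > ((1344258162296487/1000000000000000:ℝ)) := by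
  have hpl := Real.pi_gt_d20
  have hpu := Real.pi_lt_d20
  obtain ⟨r, hr⟩ : ∃ y:ℝ, (2.97:ℝ) - π = y := ⟨_, rfl⟩
  have hRl : ((-85796326794897/500000000000000:ℝ)) ≤ r := by rw [← hr]; linarith only [hpu]
  have hRu : r ≤ ((-171592653589793/1000000000000000:ℝ)) := by rw [← hr]; linarith only [hpl]
  have es := sin_ival (m := (1340567606171/1000000000000000:ℝ)) (E := (169/1000000000000000:ℝ)) (by linarith only [hRl] : ((-1340567606171/1000000000000000:ℝ)) ≤ (r)/128) (by linarith only [hRu] : (r)/128 ≤ ((-134056760617/100000000000000:ℝ))) (by norm_num) (by norm_num) (by norm_num) (by norm_num)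
  have esl : ((-1340567204813/1000000000000000:ℝ)) ≤ Real.sin ((r)/128) := by linarith only [es.1, (by norm_num : ((-1340567204813/1000000000000000:ℝ)) ≤ ((-1340567606171/1000000000000000:ℝ)) - ((-134056760617/100000000000000:ℝ))^3/6 - ((169/1000000000000000:ℝ)))]
  have esu : Real.sin ((r)/128) ≤ ((-1340567204473/1000000000000000:ℝ)) := by linarith only [es.2, (by norm_num : ((-134056760617/100000000000000:ℝ)) - ((-1340567606171/1000000000000000:ℝ))^3/6 + ((169/1000000000000000:ℝ)) ≤ ((-1340567204473/1000000000000000:ℝ)))]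
  have ec64 := cos_from_sin (show (r)/64 = 2*((r)/128) by ring) esl esu (by norm_num) (by norm_num) (Or.inr (Or.inl ⟨by norm_num, by norm_num⟩)) (show ((499998202879569/500000000000000:ℝ)) ≤ 1-2*((1797120431/1000000000000000:ℝ)) by norm_num) (show 1-2*((1797120429/1000000000000000:ℝ)) ≤ ((499998202879571/500000000000000:ℝ)) by norm_num)
  have ec32 := cos_dbl (show (r)/32 = 2*((r)/64) by ring) ec64.1 ec64.2 (by norm_num) (by norm_num) (Or.inl ⟨by norm_num, by norm_num⟩) (show ((249996405765597/250000000000000:ℝ)) ≤ 2*((499996405765597/500000000000000:ℝ))-1 by norm_num) (show 2*((999992811531203/1000000000000000:ℝ))-1 ≤ ((499992811531203/500000000000000:ℝ)) by norm_num)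
  have ec16 := cos_dbl (show (r)/16 = 2*((r)/32) by ring) ec32.1 ec32.2 (by norm_num) (by norm_num) (Or.inl ⟨by norm_num, by norm_num⟩) (show ((31248202895717/31250000000000:ℝ)) ≤ 2*((62498202895717/62500000000000:ℝ))-1 by norm_num) (show 2*((999971246331509/1000000000000000:ℝ))-1 ≤ ((499971246331509/500000000000000:ℝ)) by norm_num)
  have ec8 := cos_dbl (show (r)/8 = 2*((r)/16) by ring) ec16.1 ec16.2 (by norm_num) (by norm_num) (Or.inl ⟨by norm_num, by norm_num⟩) (show ((499884988632981/500000000000000:ℝ)) ≤ 2*((999884988632981/1000000000000000:ℝ))-1 by norm_num) (show 2*((99988498863313/100000000000000:ℝ))-1 ≤ ((49988498863313/50000000000000:ℝ)) by norm_num)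
  have ec4 := cos_dbl (show (r)/4 = 2*((r)/8) by ring) ec8.1 ec8.2 (by norm_num) (by norm_num) (Or.inl ⟨by norm_num, by norm_num⟩) (show ((249770003721191/250000000000000:ℝ)) ≤ 2*((499770003721191/500000000000000:ℝ))-1 by norm_num) (show 2*((999540007442979/1000000000000000:ℝ))-1 ≤ ((499540007442979/500000000000000:ℝ)) by norm_num)
  have ec2 := cos_dbl (show (r)/2 = 2*((r)/4) by ring) ec4.1 ec4.2 (by norm_num) (by norm_num) (Or.inl ⟨by norm_num, by norm_num⟩) (show ((24908043807107/25000000000000:ℝ)) ≤ 2*((49908043807107/50000000000000:ℝ))-1 by norm_num) (show 2*((998160876144527/1000000000000000:ℝ))-1 ≤ ((498160876144527/500000000000000:ℝ)) by norm_num)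
  have ec1 := cos_dbl (show (r) = 2*((r)/2) by ring) ec2.1 ec2.2 (by norm_num) (by norm_num) (Or.inl ⟨by norm_num, by norm_num⟩) (show ((246328517037409/250000000000000:ℝ)) ≤ 2*((496328517037409/500000000000000:ℝ))-1 by norm_num) (show 2*((248164258521083/250000000000000:ℝ))-1 ≤ ((123164258521083/125000000000000:ℝ)) by norm_num)
  have hid : Real.cos ((2.97:ℝ)) = -Real.cos r := by rw [show ((2.97:ℝ):ℝ) = r + π by rw [← hr]; ring, Real.cos_add_pi]
  have hK1 : ((-123164258521083/125000000000000:ℝ)) ≤ Real.cos ((2.97:ℝ)) ∧ Real.cos ((2.97:ℝ)) ≤ ((-246328517037409/250000000000000:ℝ)) := by rw [hid]; exact ⟨by linarith only [ec1.2], by linarith only [ec1.1]⟩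
  have s2 := sq_ival (m := (194168762578717/200000000000000:ℝ)) (M := (970843812931083/1000000000000000:ℝ)) hK1.1 hK1.2 (by norm_num) (by norm_num) (Or.inr (Or.inl ⟨by norm_num, by norm_num⟩))
  have e2 : Real.cos (2 * (2.97:ℝ)) = 2 * Real.cos ((2.97:ℝ)) ^ 2 - 1 := by have h := Real.cos_two_mul ((2.97:ℝ)); rw [show 2 * ((2.97:ℝ):ℝ) = 2 * (2.97:ℝ) by norm_num] at h; exact h
  have hK2 : ((94168762578717/100000000000000:ℝ)) ≤ Real.cos (2 * (2.97:ℝ)) ∧ Real.cos (2 * (2.97:ℝ)) ≤ ((470843812931083/500000000000000:ℝ)) := by rw [e2]; exact ⟨by linarith only [s2.1], by linarith only [s2.2]⟩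
  have p3 := mul_nn hK1.1 hK1.2 (by norm_num) hK2.1 (by norm_num) hK2.2
  have e3 : Real.cos (3 * (2.97:ℝ)) = 2 * Real.cos ((2.97:ℝ)) * Real.cos (2 * (2.97:ℝ)) - Real.cos ((2.97:ℝ)) := by have h := cosrec (2 * (2.97:ℝ)) ((2.97:ℝ)); rw [show (2 * (2.97:ℝ)) + (2.97:ℝ) = 3 * (2.97:ℝ) by norm_num, show (2 * (2.97:ℝ)) - (2.97:ℝ) = (2.97:ℝ) by norm_num] at h; linarith only [h]
  have hK3 : ((-108800257876881/125000000000000:ℝ)) ≤ Real.cos (3 * (2.97:ℝ)) ∧ Real.cos (3 * (2.97:ℝ)) ≤ ((-870402062812393/1000000000000000:ℝ)) := by rw [e3]; exact ⟨by linarith only [p3.1, hK1.2], by linarith only [p3.2, hK1.1]⟩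
  have p4 := mul_np hK1.1 hK1.2 (by norm_num) hK3.1 hK3.2 (by norm_num)
  have e4 : Real.cos (4 * (2.97:ℝ)) = 2 * Real.cos ((2.97:ℝ)) * Real.cos (3 * (2.97:ℝ)) - Real.cos (2 * (2.97:ℝ)) := by have h := cosrec (3 * (2.97:ℝ)) ((2.97:ℝ)); rw [show (3 * (2.97:ℝ)) + (2.97:ℝ) = 4 * (2.97:ℝ) by norm_num, show (3 * (2.97:ℝ)) - (2.97:ℝ) = 2 * (2.97:ℝ) by norm_num] at h; linarith only [h]
  have hK4 : ((773551169008861/1000000000000000:ℝ)) ≤ Real.cos (4 * (2.97:ℝ)) ∧ Real.cos (4 * (2.97:ℝ)) ≤ ((38677558475817/50000000000000:ℝ)) := by rw [e4]; exact ⟨by linarith only [p4.1, hK2.2], by linarith only [p4.2, hK2.1]⟩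
  have p5 := mul_nn hK1.1 hK1.2 (by norm_num) hK4.1 (by norm_num) hK4.2
  have e5 : Real.cos (5 * (2.97:ℝ)) = 2 * Real.cos ((2.97:ℝ)) * Real.cos (4 * (2.97:ℝ)) - Real.cos (3 * (2.97:ℝ)) := by have h := cosrec (4 * (2.97:ℝ)) ((2.97:ℝ)); rw [show (4 * (2.97:ℝ)) + (2.97:ℝ) = 5 * (2.97:ℝ) by norm_num, show (4 * (2.97:ℝ)) - (2.97:ℝ) = 3 * (2.97:ℝ) by norm_num] at h; linarith only [h]
  have hK5 : ((-653979636733153/1000000000000000:ℝ)) ≤ Real.cos (5 * (2.97:ℝ)) ∧ Real.cos (5 * (2.97:ℝ)) ≤ ((-326989817750503/500000000000000:ℝ)) := by rw [e5]; exact ⟨by linarith only [p5.1, hK3.2], by linarith only [p5.2, hK3.1]⟩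
  have p6 := mul_np hK1.1 hK1.2 (by norm_num) hK5.1 hK5.2 (by norm_num)
  have e6 : Real.cos (6 * (2.97:ℝ)) = 2 * Real.cos ((2.97:ℝ)) * Real.cos (5 * (2.97:ℝ)) - Real.cos (4 * (2.97:ℝ)) := by have h := cosrec (5 * (2.97:ℝ)) ((2.97:ℝ)); rw [show (5 * (2.97:ℝ)) + (2.97:ℝ) = 6 * (2.97:ℝ) by norm_num, show (5 * (2.97:ℝ)) - (2.97:ℝ) = 4 * (2.97:ℝ) by norm_num] at h; linarith only [h]
  have hK6 : ((128799875192171/250000000000000:ℝ)) ≤ Real.cos (6 * (2.97:ℝ)) ∧ Real.cos (6 * (2.97:ℝ)) ≤ ((128799875932289/250000000000000:ℝ)) := by rw [e6]; exact ⟨by linarith only [p6.1, hK4.2], by linarith only [p6.2, hK4.1]⟩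
  have p7 := mul_nn hK1.1 hK1.2 (by norm_num) hK6.1 (by norm_num) hK6.2
  have e7 : Real.cos (7 * (2.97:ℝ)) = 2 * Real.cos ((2.97:ℝ)) * Real.cos (6 * (2.97:ℝ)) - Real.cos (5 * (2.97:ℝ)) := by have h := cosrec (6 * (2.97:ℝ)) ((2.97:ℝ)); rw [show (6 * (2.97:ℝ)) + (2.97:ℝ) = 7 * (2.97:ℝ) by norm_num, show (6 * (2.97:ℝ)) - (2.97:ℝ) = 5 * (2.97:ℝ) by norm_num] at h; linarith only [h]
  have hK7 : ((-361287002374697/1000000000000000:ℝ)) ≤ Real.cos (7 * (2.97:ℝ)) ∧ Real.cos (7 * (2.97:ℝ)) ≤ ((-180643497644477/500000000000000:ℝ)) := by rw [e7]; exact ⟨by linarith only [p7.1, hK5.2], by linarith only [p7.2, hK5.1]⟩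
  have p8 := mul_np hK1.1 hK1.2 (by norm_num) hK7.1 hK7.2 (by norm_num)
  have e8 : Real.cos (8 * (2.97:ℝ)) = 2 * Real.cos ((2.97:ℝ)) * Real.cos (7 * (2.97:ℝ)) - Real.cos (6 * (2.97:ℝ)) := by have h := cosrec (7 * (2.97:ℝ)) ((2.97:ℝ)); rw [show (7 * (2.97:ℝ)) + (2.97:ℝ) = 8 * (2.97:ℝ) by norm_num, show (7 * (2.97:ℝ)) - (2.97:ℝ) = 6 * (2.97:ℝ) by norm_num] at h; linarith only [h]
  have hK8 : ((196762814466279/1000000000000000:ℝ)) ≤ Real.cos (8 * (2.97:ℝ)) ∧ Real.cos (8 * (2.97:ℝ)) ≤ ((39352566280773/200000000000000:ℝ)) := by rw [e8]; exact ⟨by linarith only [p8.1, hK6.2], by linarith only [p8.2, hK6.1]⟩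
  have p9 := mul_nn hK1.1 hK1.2 (by norm_num) hK8.1 (by norm_num) hK8.2
  have e9 : Real.cos (9 * (2.97:ℝ)) = 2 * Real.cos ((2.97:ℝ)) * Real.cos (8 * (2.97:ℝ)) - Real.cos (7 * (2.97:ℝ)) := by have h := cosrec (8 * (2.97:ℝ)) ((2.97:ℝ)); rw [show (8 * (2.97:ℝ)) + (2.97:ℝ) = 9 * (2.97:ℝ) by norm_num, show (8 * (2.97:ℝ)) - (2.97:ℝ) = 7 * (2.97:ℝ) by norm_num] at h; linarith only [h]
  have hK9 : ((-26459376460901/1000000000000000:ℝ)) ≤ Real.cos (9 * (2.97:ℝ)) ∧ Real.cos (9 * (2.97:ℝ)) ≤ ((-5291867197997/200000000000000:ℝ)) := by rw [e9]; exact ⟨by linarith only [p9.1, hK7.2], by linarith only [p9.2, hK7.1]⟩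
  have p10 := mul_np hK1.1 hK1.2 (by norm_num) hK9.1 hK9.2 (by norm_num)
  have e10 : Real.cos (10 * (2.97:ℝ)) = 2 * Real.cos ((2.97:ℝ)) * Real.cos (9 * (2.97:ℝ)) - Real.cos (8 * (2.97:ℝ)) := by have h := cosrec (9 * (2.97:ℝ)) ((2.97:ℝ)); rw [show (9 * (2.97:ℝ)) + (2.97:ℝ) = 10 * (2.97:ℝ) by norm_num, show (9 * (2.97:ℝ)) - (2.97:ℝ) = 8 * (2.97:ℝ) by norm_num] at h; linarith only [h]
  have hK10 : ((-28924263886841/200000000000000:ℝ)) ≤ Real.cos (10 * (2.97:ℝ)) ∧ Real.cos (10 * (2.97:ℝ)) ≤ ((-28924244548497/200000000000000:ℝ)) := by rw [e10]; exact ⟨by linarith only [p10.1, hK8.2], by linarith only [p10.2, hK8.1]⟩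
  have p11 := mul_np hK1.1 hK1.2 (by norm_num) hK10.1 hK10.2 (by norm_num)
  have e11 : Real.cos (11 * (2.97:ℝ)) = 2 * Real.cos ((2.97:ℝ)) * Real.cos (10 * (2.97:ℝ)) - Real.cos (9 * (2.97:ℝ)) := by have h := cosrec (10 * (2.97:ℝ)) ((2.97:ℝ)); rw [show (10 * (2.97:ℝ)) + (2.97:ℝ) = 11 * (2.97:ℝ) by norm_num, show (10 * (2.97:ℝ)) - (2.97:ℝ) = 9 * (2.97:ℝ) by norm_num] at h; linarith only [h]
  have hK11 : ((31145398663233/100000000000000:ℝ)) ≤ Real.cos (11 * (2.97:ℝ)) ∧ Real.cos (11 * (2.97:ℝ)) ≤ ((155727108826087/500000000000000:ℝ)) := by rw [e11]; exact ⟨by linarith only [p11.1, hK9.2], by linarith only [p11.2, hK9.1]⟩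
  have p12 := mul_nn hK1.1 hK1.2 (by norm_num) hK11.1 (by norm_num) hK11.2
  have e12 : Real.cos (12 * (2.97:ℝ)) = 2 * Real.cos ((2.97:ℝ)) * Real.cos (11 * (2.97:ℝ)) - Real.cos (10 * (2.97:ℝ)) := by have h := cosrec (11 * (2.97:ℝ)) ((2.97:ℝ)); rw [show (11 * (2.97:ℝ)) + (2.97:ℝ) = 12 * (2.97:ℝ) by norm_num, show (11 * (2.97:ℝ)) - (2.97:ℝ) = 10 * (2.97:ℝ) by norm_num] at h; linarith only [h]
  have hK12 : ((-23456961087191/50000000000000:ℝ)) ≤ Real.cos (12 * (2.97:ℝ)) ∧ Real.cos (12 * (2.97:ℝ)) ≤ ((-469138669786041/1000000000000000:ℝ)) := by rw [e12]; exact ⟨by linarith only [p12.1, hK10.2], by linarith only [p12.2, hK10.1]⟩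
  have p13 := mul_np hK1.1 hK1.2 (by norm_num) hK12.1 hK12.2 (by norm_num)
  have e13 : Real.cos (13 * (2.97:ℝ)) = 2 * Real.cos ((2.97:ℝ)) * Real.cos (12 * (2.97:ℝ)) - Real.cos (11 * (2.97:ℝ)) := by have h := cosrec (12 * (2.97:ℝ)) ((2.97:ℝ)); rw [show (12 * (2.97:ℝ)) + (2.97:ℝ) = 13 * (2.97:ℝ) by norm_num, show (12 * (2.97:ℝ)) - (2.97:ℝ) = 11 * (2.97:ℝ) by norm_num] at h; linarith only [h]
  have hK13 : ((613043644854211/1000000000000000:ℝ)) ≤ Real.cos (13 * (2.97:ℝ)) ∧ Real.cos (13 * (2.97:ℝ)) ≤ ((613044963595439/1000000000000000:ℝ)) := by rw [e13]; exact ⟨by linarith only [p13.1, hK11.2], by linarith only [p13.2, hK11.1]⟩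
  have p14 := mul_nn hK1.1 hK1.2 (by norm_num) hK13.1 (by norm_num) hK13.2
  have e14 : Real.cos (14 * (2.97:ℝ)) = 2 * Real.cos ((2.97:ℝ)) * Real.cos (13 * (2.97:ℝ)) - Real.cos (12 * (2.97:ℝ)) := by have h := cosrec (13 * (2.97:ℝ)) ((2.97:ℝ)); rw [show (13 * (2.97:ℝ)) + (2.97:ℝ) = 14 * (2.97:ℝ) by norm_num, show (13 * (2.97:ℝ)) - (2.97:ℝ) = 12 * (2.97:ℝ) by norm_num] at h; linarith only [h]
  have hK14 : ((-29557799372601/40000000000000:ℝ)) ≤ Real.cos (14 * (2.97:ℝ)) ∧ Real.cos (14 * (2.97:ℝ)) ≤ ((-369470916792673/500000000000000:ℝ)) := by rw [e14]; exact ⟨by linarith only [p14.1, hK12.2], by linarith only [p14.2, hK12.1]⟩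
  have p15 := mul_np hK1.1 hK1.2 (by norm_num) hK14.1 hK14.2 (by norm_num)
  have e15 : Real.cos (15 * (2.97:ℝ)) = 2 * Real.cos ((2.97:ℝ)) * Real.cos (14 * (2.97:ℝ)) - Real.cos (13 * (2.97:ℝ)) := by have h := cosrec (14 * (2.97:ℝ)) ((2.97:ℝ)); rw [show (14 * (2.97:ℝ)) + (2.97:ℝ) = 15 * (2.97:ℝ) by norm_num, show (14 * (2.97:ℝ)) - (2.97:ℝ) = 13 * (2.97:ℝ) by norm_num] at h; linarith only [h]
  have hK15 : ((421567302378209/500000000000000:ℝ)) ≤ Real.cos (15 * (2.97:ℝ)) ∧ Real.cos (15 * (2.97:ℝ)) ≤ ((843142132442323/1000000000000000:ℝ)) := by rw [e15]; exact ⟨by linarith only [p15.1, hK13.2], by linarith only [p15.2, hK13.1]⟩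
  have p16 := mul_nn hK1.1 hK1.2 (by norm_num) hK15.1 (by norm_num) hK15.2
  have e16 : Real.cos (16 * (2.97:ℝ)) = 2 * Real.cos ((2.97:ℝ)) * Real.cos (15 * (2.97:ℝ)) - Real.cos (14 * (2.97:ℝ)) := by have h := cosrec (15 * (2.97:ℝ)) ((2.97:ℝ)); rw [show (15 * (2.97:ℝ)) + (2.97:ℝ) = 16 * (2.97:ℝ) by norm_num, show (15 * (2.97:ℝ)) - (2.97:ℝ) = 14 * (2.97:ℝ) by norm_num] at h; linarith only [h]
  have hK16 : ((-18451555510739/20000000000000:ℝ)) ≤ Real.cos (16 * (2.97:ℝ)) ∧ Real.cos (16 * (2.97:ℝ)) ≤ ((-461279895252769/500000000000000:ℝ)) := by rw [e16]; exact ⟨by linarith only [p16.1, hK14.2], by linarith only [p16.2, hK14.1]⟩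
  have p17 := mul_np hK1.1 hK1.2 (by norm_num) hK16.1 hK16.2 (by norm_num)
  have e17 : Real.cos (17 * (2.97:ℝ)) = 2 * Real.cos ((2.97:ℝ)) * Real.cos (16 * (2.97:ℝ)) - Real.cos (15 * (2.97:ℝ)) := by have h := cosrec (16 * (2.97:ℝ)) ((2.97:ℝ)); rw [show (16 * (2.97:ℝ)) + (2.97:ℝ) = 17 * (2.97:ℝ) by norm_num, show (16 * (2.97:ℝ)) - (2.97:ℝ) = 15 * (2.97:ℝ) by norm_num] at h; linarith only [h]
  have hK17 : ((243720037036563/250000000000000:ℝ)) ≤ Real.cos (17 * (2.97:ℝ)) ∧ Real.cos (17 * (2.97:ℝ)) ≤ ((4874615588381/5000000000000:ℝ)) := by rw [e17]; exact ⟨by linarith only [p17.1, hK15.2], by linarith only [p17.2, hK15.1]⟩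
  have p18 := mul_nn hK1.1 hK1.2 (by norm_num) hK17.1 (by norm_num) hK17.2
  have e18 : Real.cos (18 * (2.97:ℝ)) = 2 * Real.cos ((2.97:ℝ)) * Real.cos (17 * (2.97:ℝ)) - Real.cos (16 * (2.97:ℝ)) := by have h := cosrec (17 * (2.97:ℝ)) ((2.97:ℝ)); rw [show (17 * (2.97:ℝ)) + (2.97:ℝ) = 18 * (2.97:ℝ) by norm_num, show (17 * (2.97:ℝ)) - (2.97:ℝ) = 16 * (2.97:ℝ) by norm_num] at h; linarith only [h]
  have hK18 : ((-99865113595289/100000000000000:ℝ)) ≤ Real.cos (18 * (2.97:ℝ)) ∧ Real.cos (18 * (2.97:ℝ)) ≤ ((-124818559239957/125000000000000:ℝ)) := by rw [e18]; exact ⟨by linarith only [p18.1, hK16.2], by linarith only [p18.2, hK16.1]⟩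
  have p19 := mul_np hK1.1 hK1.2 (by norm_num) hK18.1 hK18.2 (by norm_num)
  have e19 : Real.cos (19 * (2.97:ℝ)) = 2 * Real.cos ((2.97:ℝ)) * Real.cos (18 * (2.97:ℝ)) - Real.cos (17 * (2.97:ℝ)) := by have h := cosrec (18 * (2.97:ℝ)) ((2.97:ℝ)); rw [show (18 * (2.97:ℝ)) + (2.97:ℝ) = 19 * (2.97:ℝ) by norm_num, show (18 * (2.97:ℝ)) - (2.97:ℝ) = 17 * (2.97:ℝ) by norm_num] at h; linarith only [h]
  have hK19 : ((992844600488573/1000000000000000:ℝ)) ≤ Real.cos (19 * (2.97:ℝ)) ∧ Real.cos (19 * (2.97:ℝ)) ≤ ((248272469686937/250000000000000:ℝ)) := by rw [e19]; exact ⟨by linarith only [p19.1, hK17.2], by linarith only [p19.2, hK17.1]⟩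
  have p20 := mul_nn hK1.1 hK1.2 (by norm_num) hK19.1 (by norm_num) hK19.2
  have e20 : Real.cos (20 * (2.97:ℝ)) = 2 * Real.cos ((2.97:ℝ)) * Real.cos (19 * (2.97:ℝ)) - Real.cos (18 * (2.97:ℝ)) := by have h := cosrec (19 * (2.97:ℝ)) ((2.97:ℝ)); rw [show (19 * (2.97:ℝ)) + (2.97:ℝ) = 20 * (2.97:ℝ) by norm_num, show (19 * (2.97:ℝ)) - (2.97:ℝ) = 18 * (2.97:ℝ) by norm_num] at h; linarith only [h]
  have hK20 : ((-479231191526241/500000000000000:ℝ)) ≤ Real.cos (20 * (2.97:ℝ)) ∧ Real.cos (20 * (2.97:ℝ)) ≤ ((-957876368742701/1000000000000000:ℝ)) := by rw [e20]; exact ⟨by linarith only [p20.1, hK18.2], by linarith only [p20.2, hK18.1]⟩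
  have p21 := mul_np hK1.1 hK1.2 (by norm_num) hK20.1 hK20.2 (by norm_num)
  have e21 : Real.cos (21 * (2.97:ℝ)) = 2 * Real.cos ((2.97:ℝ)) * Real.cos (20 * (2.97:ℝ)) - Real.cos (19 * (2.97:ℝ)) := by have h := cosrec (20 * (2.97:ℝ)) ((2.97:ℝ)); rw [show (20 * (2.97:ℝ)) + (2.97:ℝ) = 21 * (2.97:ℝ) by norm_num, show (20 * (2.97:ℝ)) - (2.97:ℝ) = 19 * (2.97:ℝ) by norm_num] at h; linarith only [h]
  have hK21 : ((178905648918559/200000000000000:ℝ)) ≤ Real.cos (21 * (2.97:ℝ)) ∧ Real.cos (21 * (2.97:ℝ)) ≤ ((447964169587787/500000000000000:ℝ)) := by rw [e21]; exact ⟨by linarith only [p21.1, hK19.2], by linarith only [p21.2, hK19.1]⟩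
  have qs := sin_ival (m := (297/8000:ℝ)) (E := (98938341/1000000000000000:ℝ)) (by norm_num : ((297/8000:ℝ)) ≤ ((2.97:ℝ) / 10)/8) (by norm_num : ((2.97:ℝ) / 10)/8 ≤ ((297/8000:ℝ))) (by norm_num) (by norm_num) (by norm_num) (by norm_num)
  have qsl : ((1159886657597/31250000000000:ℝ)) ≤ Real.sin (((2.97:ℝ) / 10)/8) := by linarith only [qs.1, (by norm_num : ((1159886657597/31250000000000:ℝ)) ≤ ((297/8000:ℝ)) - ((297/8000:ℝ))^3/6 - ((98938341/1000000000000000:ℝ)))]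
  have qsu : Real.sin (((2.97:ℝ) / 10)/8) ≤ ((37116570919787/1000000000000000:ℝ)) := by linarith only [qs.2, (by norm_num : ((297/8000:ℝ)) - ((297/8000:ℝ))^3/6 + ((98938341/1000000000000000:ℝ)) ≤ ((37116570919787/1000000000000000:ℝ)))]
  have qc4 := cos_from_sin (show ((2.97:ℝ) / 10)/4 = 2*(((2.97:ℝ) / 10)/8) by ring) qsl qsu (by norm_num) (by norm_num) (Or.inl ⟨by norm_num, by norm_num⟩) (show ((124655590040789/125000000000000:ℝ)) ≤ 1-2*((344409959211/250000000000000:ℝ)) by norm_num) (show 1-2*((688812573937/500000000000000:ℝ)) ≤ ((249311187426063/250000000000000:ℝ)) by norm_num)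
  have qc2 := cos_dbl (show ((2.97:ℝ) / 10)/2 = 2*(((2.97:ℝ) / 10)/4) by ring) qc4.1 qc4.2 (by norm_num) (by norm_num) (Or.inl ⟨by norm_num, by norm_num⟩) (show ((30906064513669/31250000000000:ℝ)) ≤ 2*((62156064513669/62500000000000:ℝ))-1 by norm_num) (show 2*((994497090812697/1000000000000000:ℝ))-1 ≤ ((494497090812697/500000000000000:ℝ)) by norm_num)
  have qc1 := cos_dbl (show ((2.97:ℝ) / 10) = 2*(((2.97:ℝ) / 10)/2) by ring) qc2.1 qc2.2 (by norm_num) (by norm_num) (Or.inl ⟨by norm_num, by norm_num⟩) (show ((478109259492423/500000000000000:ℝ)) ≤ 2*((978109259492423/1000000000000000:ℝ))-1 by norm_num) (show 2*((978109491288883/1000000000000000:ℝ))-1 ≤ ((478109491288883/500000000000000:ℝ)) by norm_num)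
  rw [dExpand]
  linarith only [hK1.1, hK1.2, hK2.1, hK2.2, hK3.1, hK3.2, hK4.1, hK4.2, hK5.1, hK5.2, hK6.1, hK6.2, hK7.1, hK7.2, hK8.1, hK8.2, hK9.1, hK9.2, hK10.1, hK10.2, hK11.1, hK11.2, hK12.1, hK12.2, hK13.1, hK13.2, hK14.1, hK14.2, hK15.1, hK15.2, hK16.1, hK16.2, hK17.1, hK17.2, hK18.1, hK18.2, hK19.1, hK19.2, hK20.1, hK20.2, hK21.1, hK21.2, qc1.1]



theorem lemma8_d : ∀ x ∈ Set.Icc (2.908 : ℝ) 2.970, Δ x > 0.90 := by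
  intro x hx
  obtain ⟨hx1, hx2⟩ := hx
  rcases le_total x (2.911:ℝ) with h0|h0
  · have hL := dLip x (2.9095:ℝ)
    have ha : |x - (2.9095:ℝ)| ≤ ((3/2000:ℝ)) := abs_le.2 ⟨by linarith, by linarith⟩
    linarith [pt1]
  rcases le_total x (2.9166:ℝ) with h1|h1
  · have hL := dLip x (2.9138:ℝ)
    have ha : |x - (2.9138:ℝ)| ≤ ((7/2500:ℝ)) := abs_le.2 ⟨by linarith, by linarith⟩
    linarith [pt2]
  rcases le_total x (2.92781:ℝ) with h2|h2
  · have hL := dLip x (2.9222:ℝ)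
    have ha : |x - (2.9222:ℝ)| ≤ ((561/100000:ℝ)) := abs_le.2 ⟨by linarith, by linarith⟩
    linarith [pt3]
  rcases le_total x (2.9527:ℝ) with h3|h3
  · have hL := dLip x (2.9403:ℝ)
    have ha : |x - (2.9403:ℝ)| ≤ ((1249/100000:ℝ)) := abs_le.2 ⟨by linarith, by linarith⟩
    linarith [pt4]
  have hL := dLip x (2.97:ℝ)
  have ha : |x - (2.97:ℝ)| ≤ ((173/10000:ℝ)) := abs_le.2 ⟨by linarith, by linarith⟩
  linarith [pt5]
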